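/- arXiv:1711.05958 — 3 statements merged into one kernel-verified Lean document; each statement's English description precedes it below -/
import Mathlib

section
/- The Kanev correspondence operator of the adjoint orbit of E₈ satisfies a quadratic equation with integer coefficient q = 60. Precisely: let P be the linear endomorphism of the real vector space of functions f : Δ → ℝ defined by (P f)(α) = Σ_{β ∈ Δ} ⟨α,β⟩·f(β). Then P ∘ P = 60 · P. -/
set_option maxHeartbeats 1000000
set_option maxRecDepth 10000

open scoped BigOperators RealInnerProductSpace

noncomputable section

abbrev E8Space : Type := EuclideanSpace ℝ (Fin 8)

/-- The E₈ root system: vectors of square-norm 2 whose coordinates are either all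
integers or all half-integers, with even coordinate sum. -/
def E8Delta : Set E8Space :=
  {v | ⟪v, v⟫ = 2 ∧
    ((∀ i : Fin 8, ∃ n : ℤ, v i = (n : ℝ)) ∨
     (∀ i : Fin 8, ∃ n : ℤ, v i = (n : ℝ) + 1 / 2)) ∧
    ∃ m : ℤ, (∑ i : Fin 8, v i) = 2 * (m : ℝ)}

/-- The Kanev correspondence operator on functions on the E₈ root system:
`(P f)(α) = ∑_{β ∈ Δ} ⟪α,β⟫ f(β)`. -/
def KanevP (f : E8Delta → ℝ) (α : E8Delta) : ℝ :=
  ∑ᶠ β : E8Delta, ⟪(α : E8Space), (β : E8Space)⟫ * f β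

/-! ### Explicit enumeration of the E₈ roots, encoded in base 5 (doubled coordinates). -/

/-- Codes of the 240 roots of E₈: each code is `∑ i (2·βᵢ + 2)·5^i` for a root β. -/
def rootCodes : List ℕ := [
7812, 32812, 37812, 38812, 39012, 39052, 39060, 39064, 39072, 39112, 39312, 40312, 45312, 70312, 97656, 97668, 97708, 97716, 97908, 97916, 97956, 97968, 98908, 98916, 98956, 98968, 99156, 99168, 99208, 99216, 103908, 103916, 103956, 103968, 104156, 104168, 104208, 104216, 105156, 105168, 105208, 105216, 105408, 105416, 105456, 105468, 128908, 128916, 128956, 128968, 129156, 129168, 129208, 129216, 130156, 130168, 130208, 130216, 130408, 130416, 130456, 130468, 135156, 135168, 135208, 135216, 135408, 135416, 135456, 135468, 136408, 136416, 136456, 136468, 136656, 136668, 136708, 136716, 157812, 162812, 163812, 164012, 164052, 164060, 164064, 164072, 164112, 164312, 165312, 170312, 187812, 188812, 189012, 189052, 189060, 189064, 189072, 189112, 189312, 190312, 193812, 194012, 194052, 194060, 194064, 194072, 194112, 194312, 195012, 195052, 195060, 195064, 195072, 195112, 195252, 195260, 195264, 195272, 195300, 195304, 195320, 195324, 195352,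 195360, 195364, 195372, 195512, 195552, 195560, 195564, 195572, 195612, 196312, 196512, 196552, 196560, 196564, 196572, 196612, 196812, 200312, 201312, 201512, 201552, 201560, 201564, 201572, 201612, 201812, 202812, 220312, 225312, 226312, 226512, 226552, 226560, 226564, 226572, 226612, 226812, 227812, 232812, 253908, 253916, 253956, 253968, 254156, 254168, 254208, 254216, 255156, 255168, 255208, 255216, 255408, 255416, 255456, 255468, 260156, 260168, 260208, 260216, 260408, 260416, 260456, 260468, 261408, 261416, 261456, 261468, 261656, 261668, 261708, 261716, 285156, 285168, 285208, 285216, 285408, 285416, 285456, 285468, 286408, 286416, 286456, 286468, 286656, 286668, 286708, 286716, 291408, 291416, 291456, 291468, 291656, 291668, 291708, 291716, 292656, 292668, 292708, 292716, 292908, 292916, 292956, 292968, 320312, 345312, 350312, 351312, 351512, 351552, 351560, 351564, 351572, 351612, 351812, 352812, 357812, 382812]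

/-- The doubled root with code `e`. -/
def mk (e : ℕ) : Fin 8 → ℤ := fun i => ((e / 5 ^ (i : ℕ)) % 5 : ℕ) - 2

lemma rootCodes_nodup : rootCodes.Nodup := by decide

lemma rootCodes_lt : ∀ c ∈ rootCodes, c < 390625 := by decide

lemma gramZ : ∀ i j : Fin 8,
    (rootCodes.map (fun c => mk c i * mk c j)).sum = if i = j then 240 else 0 := by decide

lemma rootCodes_facts : ∀ c ∈ rootCodes,
    (∑ i : Fin 8, (mk c i) ^ 2 = 8) ∧
    ((∀ i, mk c i % 2 = 0) ∨ (∀ i, mk c i % 2 = 1)) ∧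
    (∑ i : Fin 8, mk c i) % 4 = 0 := by decide

lemma mem_codes_half : ∀ s : Fin 8 → Bool,
    (∑ i : Fin 8, (if s i then (1 : ℤ) else -1)) % 4 = 0 →
    (∑ i : Fin 8, (if s i then 3 else 1) * 5 ^ (i : ℕ)) ∈ rootCodes := by decide

lemma mem_codes_pair : ∀ k l : Fin 8, k ≠ l → ∀ a b : Bool,
    (∑ i : Fin 8, (if i = k then (if a then 4 else 0)
      else if i = l then (if b then 4 else 0) else 2) * 5 ^ (i : ℕ)) ∈ rootCodes := by decide

/-- Digit extraction: `mk` of a base-5 encoded digit vector recovers the digits. -/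
lemma mk_encode (d : Fin 8 → ℕ) (hd : ∀ i, d i < 5) (j : Fin 8) :
    mk (∑ i : Fin 8, d i * 5 ^ (i : ℕ)) j = (d j : ℤ) - 2 := by
  have h0 := hd 0; have h1 := hd 1; have h2 := hd 2; have h3 := hd 3
  have h4 := hd 4; have h5 := hd 5; have h6 := hd 6; have h7 := hd 7
  unfold mk
  rw [Fin.sum_univ_eight]
  simp only [show ((0:Fin 8):ℕ) = 0 from rfl, show ((1:Fin 8):ℕ) = 1 from rfl,
    show ((2:Fin 8):ℕ) = 2 from rfl, show ((3:Fin 8):ℕ) = 3 from rfl,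
    show ((4:Fin 8):ℕ) = 4 from rfl, show ((5:Fin 8):ℕ) = 5 from rfl,
    show ((6:Fin 8):ℕ) = 6 from rfl, show ((7:Fin 8):ℕ) = 7 from rfl]
  norm_num
  fin_cases j <;> simp only [show ((⟨0, by norm_num⟩ : Fin 8)) = 0 from rfl, show ((⟨1, by norm_num⟩ : Fin 8)) = 1 from rfl, show ((⟨2, by norm_num⟩ : Fin 8)) = 2 from rfl, show ((⟨3, by norm_num⟩ : Fin 8)) = 3 from rfl, show ((⟨4, by norm_num⟩ : Fin 8)) = 4 from rfl, show ((⟨5, by norm_num⟩ : Fin 8)) = 5 from rfl, show ((⟨6, by norm_num⟩ : Fin 8)) = 6 from rfl, show ((⟨7, by norm_num⟩ : Fin 8)) = 7 from rfl] <;> norm_num <;> omega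

lemma mk_inj {e e' : ℕ} (he : e < 390625) (he' : e' < 390625) (h : mk e = mk e') : e = e' := by
  have key : ∀ j : Fin 8, (e / 5 ^ (j : ℕ)) % 5 = (e' / 5 ^ (j : ℕ)) % 5 := by
    intro j
    have := congrFun h j
    unfold mk at this
    omega
  have k0 := key 0; have k1 := key 1; have k2 := key 2; have k3 := key 3
  have k4 := key 4; have k5 := key 5; have k6 := key 6; have k7 := key 7
  simp only [show ((0:Fin 8):ℕ) = 0 from rfl, show ((1:Fin 8):ℕ) = 1 from rfl,
    show ((2:Fin 8):ℕ) = 2 from rfl, show ((3:Fin 8):ℕ) = 3 from rfl,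
    show ((4:Fin 8):ℕ) = 4 from rfl, show ((5:Fin 8):ℕ) = 5 from rfl,
    show ((6:Fin 8):ℕ) = 6 from rfl, show ((7:Fin 8):ℕ) = 7 from rfl] at k0 k1 k2 k3 k4 k5 k6 k7
  norm_num at k0 k1 k2 k3 k4 k5 k6 k7
  omega

/-- The real root with code `e`. -/
def ρ (e : ℕ) : E8Space := WithLp.toLp 2 (fun i => (mk e i : ℝ) / 2)

lemma ρ_apply (e : ℕ) (i : Fin 8) : ρ e i = (mk e i : ℝ) / 2 := rfl

lemma ρ_inj : ∀ x ∈ rootCodes, ∀ y ∈ rootCodes, ρ x = ρ y → x = y := by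
  intro x hx y hy h
  refine mk_inj (rootCodes_lt x hx) (rootCodes_lt y hy) (funext fun i => ?_)
  have := congrFun (congrArg WithLp.ofLp h) i
  rw [ρ_apply, ρ_apply] at this
  field_simp at this
  exact_mod_cast this

/-- The E₈ root system as an explicit finite set. -/
def F : Finset E8Space := ⟨(rootCodes.map ρ : List E8Space), by
  rw [Multiset.coe_nodup]
  exact rootCodes_nodup.map_on ρ_inj⟩

lemma mem_F {x : E8Space} : x ∈ F ↔ ∃ c ∈ rootCodes, ρ c = x := by
  simp [F, Finset.mem_mk, List.mem_map]

lemma sum_F (g : E8Space → ℝ) : ∑ x ∈ F, g x = (rootCodes.map (fun c => g (ρ c))).sum := by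
  show (Multiset.map g ↑(rootCodes.map ρ)).sum = _
  rw [Multiset.map_coe, Multiset.sum_coe, List.map_map]
  rfl

/-- Real inner product on `E8Space` expands as a coordinate sum. -/
lemma inner_expand (x y : E8Space) : ⟪x, y⟫ = ∑ i : Fin 8, x i * y i := by
  simp [PiLp.inner_apply, RCLike.inner_apply, conj_trivial]
  exact Finset.sum_congr rfl fun i _ => mul_comm _ _

/-- Gram matrix of the root system: `∑_{β} βᵢ βⱼ = 60 δᵢⱼ`. -/
lemma gramR (i j : Fin 8) : ∑ β ∈ F, β i * β j = if i = j then (60 : ℝ) else 0 := by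
  rw [sum_F]
  have : (fun c => ρ c i * ρ c j) = fun c => (((mk c i * mk c j : ℤ) : ℝ)) / 4 := by
    funext c; rw [ρ_apply, ρ_apply]; push_cast; ring
  rw [this]
  have hcast : (rootCodes.map fun c => ((mk c i * mk c j : ℤ) : ℝ) / 4).sum
      = ((rootCodes.map fun c => mk c i * mk c j).sum : ℤ) / 4 := by
    induction rootCodes with
    | nil => simp
    | cons a t ih =>
      simp only [List.map_cons, List.sum_cons, ih]
      push_cast
      ring
  rw [hcast, gramZ i j]
  split <;> norm_num

/-- The key identity: `∑_{β ∈ Δ} ⟪x,β⟫⟪β,y⟫ = 60 ⟪x,y⟫`. -/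
lemma key (x y : E8Space) : ∑ β ∈ F, ⟪x, β⟫ * ⟪β, y⟫ = 60 * ⟪x, y⟫ := by
  simp only [inner_expand]
  have : ∀ β ∈ F, (∑ i : Fin 8, x i * β i) * (∑ j : Fin 8, β j * y j)
      = ∑ i : Fin 8, ∑ j : Fin 8, (x i * y j) * (β i * β j) := by
    intro β _
    rw [Finset.sum_mul_sum]
    exact Finset.sum_congr rfl fun i _ => Finset.sum_congr rfl fun j _ => by ring
  rw [Finset.sum_congr rfl this, Finset.sum_comm]
  have : ∀ i : Fin 8, ∑ β ∈ F, ∑ j : Fin 8, (x i * y j) * (β i * β j)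
      = ∑ j : Fin 8, (x i * y j) * (if i = j then (60:ℝ) else 0) := by
    intro i
    rw [Finset.sum_comm]
    exact Finset.sum_congr rfl fun j _ => by rw [← Finset.mul_sum, gramR]
  rw [Finset.sum_congr rfl fun i _ => this i]
  simp only [mul_ite, mul_zero, Finset.sum_ite_eq, Finset.mem_univ, if_true]
  rw [Finset.mul_sum]
  exact Finset.sum_congr rfl fun i _ => by ring

/-! ### The set equality `E8Delta = ↑F`. -/

lemma F_subset : ∀ x ∈ F, x ∈ E8Delta := by
  intro x hx
  obtain ⟨c, hc, rfl⟩ := mem_F.mp hx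
  obtain ⟨hsq, hpar, hs4⟩ := rootCodes_facts c hc
  refine ⟨?_, ?_, ?_⟩
  · rw [inner_expand]
    have : ∀ i : Fin 8, ρ c i * ρ c i = ((mk c i ^ 2 : ℤ) : ℝ) / 4 := by
      intro i; rw [ρ_apply]; push_cast; ring
    rw [Finset.sum_congr rfl fun i _ => this i, ← Finset.sum_div, ← Int.cast_sum, hsq]
    norm_num
  · rcases hpar with h | h
    · left
      intro i
      refine ⟨mk c i / 2, ?_⟩
      rw [ρ_apply]
      have := h i
      have h2 : (mk c i : ℝ) = 2 * ((mk c i / 2 : ℤ) : ℝ) := by exact_mod_cast (by omega : mk c i = 2 * (mk c i / 2))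
      rw [h2]; ring
    · right
      intro i
      refine ⟨mk c i / 2, ?_⟩
      rw [ρ_apply]
      have := h i
      have h2 : (mk c i : ℝ) = 2 * ((mk c i / 2 : ℤ) : ℝ) + 1 := by exact_mod_cast (by omega : mk c i = 2 * (mk c i / 2) + 1)
      rw [h2]; ring
  · refine ⟨(∑ i : Fin 8, mk c i) / 4, ?_⟩
    have h4 : ((∑ i : Fin 8, mk c i : ℤ) : ℝ) = 4 * (((∑ i : Fin 8, mk c i) / 4 : ℤ) : ℝ) := by
      exact_mod_cast (by omega : (∑ i : Fin 8, mk c i) = 4 * ((∑ i : Fin 8, mk c i) / 4))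
    have heq : ∑ i : Fin 8, ρ c i = ((∑ i : Fin 8, mk c i : ℤ) : ℝ) / 2 := by
      have : ∀ i : Fin 8, ρ c i = (mk c i : ℝ) / 2 := fun i => rfl
      rw [Finset.sum_congr rfl fun i _ => this i, ← Finset.sum_div, ← Int.cast_sum]
    rw [heq, h4]; ring

lemma Delta_subset : ∀ v ∈ E8Delta, v ∈ F := by
  intro v hv
  obtain ⟨hnorm, hint, m, hsum⟩ := hv
  rw [inner_expand] at hnorm
  rcases hint with h | h
  · -- integer case
    choose n hn using h
    have hnormZ : ∑ i : Fin 8, n i ^ 2 = 2 := by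
      have : ((∑ i : Fin 8, n i ^ 2 : ℤ) : ℝ) = 2 := by
        push_cast
        rw [← hnorm]
        exact Finset.sum_congr rfl fun i _ => by rw [hn i]; ring
      exact_mod_cast this
    have hbound : ∀ i, -1 ≤ n i ∧ n i ≤ 1 := by
      intro i
      have h1 : n i ^ 2 ≤ 2 := by
        calc n i ^ 2 ≤ ∑ j : Fin 8, n j ^ 2 :=
          Finset.single_le_sum (fun j _ => sq_nonneg (n j)) (Finset.mem_univ i)
        _ = 2 := hnormZ
      constructor <;> nlinarith
    set S := Finset.univ.filter (fun i => n i ≠ 0) with hS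
    have hcard : S.card = 2 := by
      have h1 : ∑ i ∈ S, n i ^ 2 = 2 := by
        rw [← hnormZ, hS]
        exact Finset.sum_filter_of_ne (fun i _ hsq h0 => hsq (by rw [h0]; ring))
      have h2 : ∀ i ∈ S, n i ^ 2 = 1 := by
        intro i hi
        have hne : n i ≠ 0 := (Finset.mem_filter.mp hi).2
        have hb := hbound i
        have : n i = 1 ∨ n i = -1 := by omega
        rcases this with h | h <;> rw [h] <;> ring
      rw [Finset.sum_congr rfl h2, Finset.sum_const] at h1
      have h3 : (S.card : ℤ) = 2 := by simpa using h1
      exact_mod_cast h3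
    obtain ⟨k, l, hkl, hSkl⟩ := Finset.card_eq_two.mp hcard
    have hnk : n k = 1 ∨ n k = -1 := by
      have hk : k ∈ S := by rw [hSkl]; simp
      have := (Finset.mem_filter.mp hk).2
      have hb := hbound k
      omega
    have hnl : n l = 1 ∨ n l = -1 := by
      have hl : l ∈ S := by rw [hSkl]; simp
      have := (Finset.mem_filter.mp hl).2
      have hb := hbound l
      omega
    have hzero : ∀ i, i ≠ k → i ≠ l → n i = 0 := by
      intro i hik hil
      by_contra h0
      have : i ∈ S := Finset.mem_filter.mpr ⟨Finset.mem_univ i, h0⟩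
      rw [hSkl] at this
      simp at this
      tauto
    set a : Bool := decide (n k = 1) with ha
    set b : Bool := decide (n l = 1) with hb
    set d : Fin 8 → ℕ := fun i => if i = k then (if a then 4 else 0)
      else if i = l then (if b then 4 else 0) else 2 with hd
    have hdlt : ∀ i, d i < 5 := by
      intro i; rw [hd]; dsimp only; split_ifs <;> omega
    have hveq : v = ρ (∑ i : Fin 8, d i * 5 ^ (i : ℕ)) := by
      refine PiLp.ext fun i => ?_
      rw [ρ_apply, mk_encode d hdlt i, hn i, hd]
      dsimp only
      by_cases hik : i = k
      · subst hik
        rcases hnk with h | h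
        · rw [if_pos rfl, h]
          have : a = true := by rw [ha]; simp [h]
          rw [this]
          norm_num
        · rw [if_pos rfl, h]
          have : a = false := by rw [ha]; simp [h]
          rw [this]
          norm_num
      · by_cases hil : i = l
        · subst hil
          rw [if_neg hik]
          rcases hnl with h | h
          · rw [if_pos rfl, h]
            have : b = true := by rw [hb]; simp [h]
            rw [this]
            norm_num
          · rw [if_pos rfl, h]
            have : b = false := by rw [hb]; simp [h]
            rw [this]
            norm_num
        · rw [if_neg hik, if_neg hil, hzero i hik hil]
          norm_num
    rw [hveq]
    refine mem_F.mpr ⟨_, ?_, rfl⟩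
    have hmem := mem_codes_pair k l hkl a b
    rw [hd]
    exact hmem
  · -- half-integer case
    choose n hn using h
    have hquarter : ∀ j, (1/4 : ℝ) ≤ v j * v j := by
      intro j
      rw [hn j]
      rcases le_or_gt 0 (n j) with hnj | hnj
      · have : (0:ℝ) ≤ (n j : ℝ) := by exact_mod_cast hnj
        nlinarith
      · have h1 : n j ≤ -1 := by omega
        have : (n j : ℝ) ≤ -1 := by exact_mod_cast h1
        nlinarith
    have hval : ∀ i, n i = 0 ∨ n i = -1 := by
      intro i
      by_contra h0
      push_neg at h0
      have hge : (3/2:ℝ) ≤ |(n i : ℝ) + 1/2| := by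
        rcases (by omega : 1 ≤ n i ∨ n i ≤ -2) with h1 | h1
        · have : (1:ℝ) ≤ (n i : ℝ) := by exact_mod_cast h1
          rw [abs_of_nonneg (by linarith)]; linarith
        · have : (n i : ℝ) ≤ -2 := by exact_mod_cast h1
          rw [abs_of_nonpos (by linarith)]; linarith
      have hsq : (9/4:ℝ) ≤ v i * v i := by
        rw [hn i]
        nlinarith [abs_nonneg ((n i : ℝ) + 1/2), sq_abs ((n i : ℝ) + 1/2)]
      have hrest : (7/4:ℝ) ≤ ∑ j ∈ Finset.univ.erase i, v j * v j := by
        calc (7/4:ℝ) = ∑ _j ∈ Finset.univ.erase i, (1/4:ℝ) := by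
              rw [Finset.sum_const, Finset.card_erase_of_mem (Finset.mem_univ i)]
              simp; norm_num
          _ ≤ _ := Finset.sum_le_sum fun j _ => hquarter j
      have : ∑ j : Fin 8, v j * v j = v i * v i + ∑ j ∈ Finset.univ.erase i, v j * v j :=
        (Finset.add_sum_erase _ _ (Finset.mem_univ i)).symm
      rw [hnorm] at this
      linarith
    set s : Fin 8 → Bool := fun i => decide (n i = 0) with hs
    set d : Fin 8 → ℕ := fun i => if s i then 3 else 1 with hd
    have hdlt : ∀ i, d i < 5 := by intro i; rw [hd]; dsimp only; split <;> omega
    have hmk : ∀ i, mk (∑ i : Fin 8, d i * 5 ^ (i : ℕ)) i = if s i then 1 else -1 := by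
      intro i
      rw [mk_encode d hdlt i, hd]
      dsimp only
      split <;> norm_num
    have hveq : v = ρ (∑ i : Fin 8, d i * 5 ^ (i : ℕ)) := by
      refine PiLp.ext fun i => ?_
      rw [ρ_apply, hmk i, hn i]
      rcases hval i with h0 | h0 <;> rw [h0] <;> simp [hs, h0] <;> norm_num
    have hsumn : ∑ i : Fin 8, n i = 2 * m - 4 := by
      have : ((∑ i : Fin 8, n i : ℤ) : ℝ) = 2 * m - 4 := by
        push_cast
        have : ∑ i : Fin 8, v i = ∑ i : Fin 8, ((n i : ℝ) + 1/2) :=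
          Finset.sum_congr rfl fun i _ => hn i
        rw [hsum] at this
        rw [Finset.sum_add_distrib] at this
        simp at this
        linarith
      exact_mod_cast this
    have hcond : (∑ i : Fin 8, (if s i then (1 : ℤ) else -1)) % 4 = 0 := by
      have : ∀ i, (if s i then (1 : ℤ) else -1) = 2 * n i + 1 := by
        intro i
        rcases hval i with h0 | h0 <;> simp [hs, h0]
      rw [Finset.sum_congr rfl fun i _ => this i]
      rw [Finset.sum_add_distrib, ← Finset.mul_sum, hsumn]
      simp
      omega
    rw [hveq]
    refine mem_F.mpr ⟨_, ?_, rfl⟩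
    rw [hd]
    exact mem_codes_half s hcond

lemma Delta_eq : E8Delta = ↑F :=
  Set.eq_of_subset_of_subset (fun v hv => Delta_subset v hv) (fun x hx => F_subset x hx)

lemma Delta_finite : E8Delta.Finite := by
  rw [Delta_eq]; exact F.finite_toSet

/-- The Kanev operator of the adjoint orbit of E₈ is linear and satisfies the
quadratic equation `P ∘ P = 60 • P`. -/
theorem KanevP_quadratic :
    IsLinearMap ℝ KanevP ∧ KanevP ∘ KanevP = (60 : ℝ) • KanevP := by
  haveI : Fintype ↥E8Delta := Delta_finite.fintype
  have hK : ∀ (f : E8Delta → ℝ) (α : E8Delta),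
      KanevP f α = ∑ β : E8Delta, ⟪(α : E8Space), (β : E8Space)⟫ * f β :=
    fun f α => finsum_eq_sum_of_fintype _
  have hsub : ∀ x y : E8Space,
      (∑ β : E8Delta, ⟪x, (β : E8Space)⟫ * ⟪(β : E8Space), y⟫) = 60 * ⟪x, y⟫ := by
    intro x y
    calc (∑ β : E8Delta, ⟪x, (β : E8Space)⟫ * ⟪(β : E8Space), y⟫)
        = ∑ᶠ β : E8Delta, ⟪x, (β : E8Space)⟫ * ⟪(β : E8Space), y⟫ :=
          (finsum_eq_sum_of_fintype _).symm
      _ = ∑ᶠ z ∈ E8Delta, ⟪x, z⟫ * ⟪z, y⟫ := finsum_set_coe_eq_finsum_mem (f := fun z => ⟪x, z⟫ * ⟪z, y⟫) E8Delta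
      _ = ∑ z ∈ F, ⟪x, z⟫ * ⟪z, y⟫ := by rw [Delta_eq, finsum_mem_coe_finset]
      _ = 60 * ⟪x, y⟫ := key x y
  constructor
  · constructor
    · intro f g
      funext α
      simp only [hK, Pi.add_apply, mul_add]
      rw [Finset.sum_add_distrib]
    · intro c f
      funext α
      simp only [hK, Pi.smul_apply, smul_eq_mul, Finset.mul_sum]
      exact Finset.sum_congr rfl fun β _ => by ring
  · funext f α
    simp only [Function.comp_apply, Pi.smul_apply, smul_eq_mul, hK]
    have h2 : ∀ β : E8Delta, ⟪(α : E8Space), (β : E8Space)⟫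
        * (∑ γ : E8Delta, ⟪(β : E8Space), (γ : E8Space)⟫ * f γ)
        = ∑ γ : E8Delta, ⟪(α : E8Space), (β : E8Space)⟫ * ⟪(β : E8Space), (γ : E8Space)⟫ * f γ := by
      intro β
      rw [Finset.mul_sum]
      exact Finset.sum_congr rfl fun γ _ => by ring
    rw [Finset.sum_congr rfl fun β _ => h2 β, Finset.sum_comm, Finset.mul_sum]
    refine Finset.sum_congr rfl fun γ _ => ?_
    have h3 : ∑ β : E8Delta, ⟪(α : E8Space), (β : E8Space)⟫ * ⟪(β : E8Space), (γ : E8Space)⟫ * f γ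
        = (∑ β : E8Delta, ⟪(α : E8Space), (β : E8Space)⟫ * ⟪(β : E8Space), (γ : E8Space)⟫) * f γ :=
      (Finset.sum_mul _ _ _).symm
    rw [h3, hsub (α : E8Space) (γ : E8Space)]
    ring
end
end

section
/- The orbits of the stabilizer H on the root system Δ are exactly the nonempty level sets of the pairing with θ: two roots α, β ∈ Δ lie in the same H-orbit if and only if ⟨α,θ⟩ = ⟨β,θ⟩. Consequently H has exactly five orbits on Δ, namely the sets Δ ∩ {x ∈ ℝ⁸ : ⟨x,θ⟩ = i} for i ∈ {−2,−1,0,1,2}. -/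
open scoped BigOperators RealInnerProductSpace

noncomputable section

/-- The highest root θ = (0,0,0,0,0,0,1,1) of E₈. -/
def thetaE8 : E8Space := WithLp.toLp 2 ![0, 0, 0, 0, 0, 0, 1, 1]

/-- The Weyl group of E₈: the group of invertible linear maps of ℝ⁸ generated by
the reflections `x ↦ x − ⟪x,α⟫α` in the roots `α ∈ Δ`. -/
def weylGroupE8 : Subgroup (E8Space ≃ₗ[ℝ] E8Space) :=
  Subgroup.closure
    {g : E8Space ≃ₗ[ℝ] E8Space | ∃ α ∈ E8Delta, ∀ x, g x = x - ⟪x, α⟫ • α}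

/-- The stabilizer of the highest root θ in the Weyl group of E₈. -/
def stabThetaE8 : Subgroup (E8Space ≃ₗ[ℝ] E8Space) :=
  weylGroupE8 ⊓ MulAction.stabilizer (E8Space ≃ₗ[ℝ] E8Space) thetaE8


/-! ### Integer model of the roots (doubled coordinates) -/

def toR (d : Fin 8 → ℤ) : E8Space := WithLp.toLp 2 (fun i => (d i : ℝ) / 2)

def dotZ8 (d e : Fin 8 → ℤ) : ℤ :=
  d 0 * e 0 + d 1 * e 1 + d 2 * e 2 + d 3 * e 3 + d 4 * e 4 + d 5 * e 5 + d 6 * e 6 + d 7 * e 7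

lemma toR_apply (d : Fin 8 → ℤ) (i : Fin 8) : toR d i = (d i : ℝ) / 2 := rfl

lemma inner_real (x y : E8Space) : ⟪x, y⟫ = ∑ i, x i * y i := by
  rw [PiLp.inner_apply]; exact Finset.sum_congr rfl (fun i _ => by simp [mul_comm])

lemma dotZ8_eq (d e : Fin 8 → ℤ) : (∑ i, d i * e i) = dotZ8 d e := by
  rw [Fin.sum_univ_eight]; rfl

lemma inner_toR (d e : Fin 8 → ℤ) : ⟪toR d, toR e⟫ = (dotZ8 d e : ℝ) / 4 := by
  rw [inner_real, ← dotZ8_eq]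
  push_cast
  rw [Finset.sum_div]
  congr 1; ext i; rw [toR_apply, toR_apply]; ring

lemma sum_toR (d : Fin 8 → ℤ) : (∑ i, toR d i) = ((∑ i, d i : ℤ) : ℝ) / 2 := by
  simp only [toR_apply]
  push_cast
  rw [Finset.sum_div]

def isRootB (d : Fin 8 → ℤ) : Bool :=
  decide (dotZ8 d d = 8) &&
    (decide (∀ i, d i % 2 = 0) || decide (∀ i, d i % 2 = 1)) &&
    decide ((∑ i, d i) % 4 = 0)

lemma toR_mem {d : Fin 8 → ℤ} (h : isRootB d = true) : toR d ∈ E8Delta := by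
  simp only [isRootB, Bool.and_eq_true, Bool.or_eq_true, decide_eq_true_eq] at h
  obtain ⟨⟨h8, hp⟩, hs⟩ := h
  refine ⟨?_, ?_, ?_⟩
  · rw [inner_toR, h8]; norm_num
  · rcases hp with hp | hp
    · left; intro i
      obtain ⟨n, hn⟩ : 2 ∣ d i := Int.dvd_of_emod_eq_zero (hp i)
      exact ⟨n, by rw [toR_apply, hn]; push_cast; ring⟩
    · right; intro i
      obtain ⟨n, hn⟩ : ∃ n, d i = 2 * n + 1 := ⟨d i / 2, by have := hp i; omega⟩
      exact ⟨n, by rw [toR_apply, hn]; push_cast; ring⟩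
  · obtain ⟨k, hk⟩ : 4 ∣ (∑ i, d i) := Int.dvd_of_emod_eq_zero hs
    exact ⟨k, by rw [sum_toR, hk]; push_cast; ring⟩

def dTheta : Fin 8 → ℤ := ![0, 0, 0, 0, 0, 0, 2, 2]

lemma theta_eq : thetaE8 = toR dTheta := by
  ext i
  fin_cases i <;>
    simp [thetaE8, dTheta, toR_apply,
      show (![0,0,0,0,0,0,1,1] : Fin 8 → ℝ) 0 = 0 from rfl,
      show (![0,0,0,0,0,0,1,1] : Fin 8 → ℝ) 1 = 0 from rfl,
      show (![0,0,0,0,0,0,1,1] : Fin 8 → ℝ) 2 = 0 from rfl,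
      show (![0,0,0,0,0,0,1,1] : Fin 8 → ℝ) 3 = 0 from rfl,
      show (![0,0,0,0,0,0,1,1] : Fin 8 → ℝ) 4 = 0 from rfl,
      show (![0,0,0,0,0,0,1,1] : Fin 8 → ℝ) 5 = 0 from rfl,
      show (![0,0,0,0,0,0,1,1] : Fin 8 → ℝ) 6 = 1 from rfl,
      show (![0,0,0,0,0,0,1,1] : Fin 8 → ℝ) 7 = 1 from rfl,
      show (![0,0,0,0,0,0,2,2] : Fin 8 → ℤ) 0 = 0 from rfl,
      show (![0,0,0,0,0,0,2,2] : Fin 8 → ℤ) 1 = 0 from rfl,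
      show (![0,0,0,0,0,0,2,2] : Fin 8 → ℤ) 2 = 0 from rfl,
      show (![0,0,0,0,0,0,2,2] : Fin 8 → ℤ) 3 = 0 from rfl,
      show (![0,0,0,0,0,0,2,2] : Fin 8 → ℤ) 4 = 0 from rfl,
      show (![0,0,0,0,0,0,2,2] : Fin 8 → ℤ) 5 = 0 from rfl,
      show (![0,0,0,0,0,0,2,2] : Fin 8 → ℤ) 6 = 2 from rfl,
      show (![0,0,0,0,0,0,2,2] : Fin 8 → ℤ) 7 = 2 from rfl]

lemma inner_theta (d : Fin 8 → ℤ) : ⟪toR d, thetaE8⟫ = ((d 6 + d 7 : ℤ) : ℝ) / 2 := by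
  rw [theta_eq, inner_toR]
  have : dotZ8 d dTheta = 2 * (d 6 + d 7) := by
    simp only [dotZ8,
      show dTheta 0 = 0 from rfl, show dTheta 1 = 0 from rfl,
      show dTheta 2 = 0 from rfl, show dTheta 3 = 0 from rfl,
      show dTheta 4 = 0 from rfl, show dTheta 5 = 0 from rfl,
      show dTheta 6 = 2 from rfl, show dTheta 7 = 2 from rfl]
    ring
  rw [this]; push_cast; ring

/-! ### Reflections and the Weyl group -/

def reflL (γ : E8Space) : E8Space →ₗ[ℝ] E8Space where
  toFun x := x - ⟪x, γ⟫ • γ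
  map_add' x y := by simp [inner_add_left, add_smul]; abel
  map_smul' c x := by simp [inner_smul_left, smul_smul, smul_sub]

def reflE (γ : E8Space) (hγ : ⟪γ, γ⟫ = 2) : E8Space ≃ₗ[ℝ] E8Space :=
  LinearEquiv.ofInvolutive (reflL γ) (fun x => by
    simp only [reflL, LinearMap.coe_mk, AddHom.coe_mk, inner_sub_left, inner_smul_left,
      RCLike.star_def, conj_trivial, hγ]
    module)

lemma reflE_apply (γ : E8Space) (hγ : ⟪γ, γ⟫ = 2) (x : E8Space) :
    reflE γ hγ x = x - ⟪x, γ⟫ • γ := rfl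

lemma weyl_inner {g : E8Space ≃ₗ[ℝ] E8Space} (hg : g ∈ weylGroupE8) (x y : E8Space) :
    ⟪g x, g y⟫ = ⟪x, y⟫ := by
  revert x y
  refine Subgroup.closure_induction ?_ ?_ ?_ ?_ hg
  · rintro g ⟨α, hα, hgα⟩ x y
    have h2 : ⟪α, α⟫ = 2 := hα.1
    rw [hgα, hgα]
    simp only [inner_sub_left, inner_sub_right, inner_smul_left, inner_smul_right,
      RCLike.star_def, conj_trivial, h2]
    rw [real_inner_comm α x, real_inner_comm α y]
    ring
  · intro x y; rfl
  · intro g h _ _ hg hh x y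
    show ⟪g (h x), g (h y)⟫ = _
    rw [hg, hh]
  · intro g _ hg x y
    have := hg (g.symm x) (g.symm y)
    simpa using this.symm

lemma reflE_mem {γ : E8Space} (hγ : γ ∈ E8Delta) (h2 : ⟪γ, γ⟫ = 2)
    (h0 : ⟪γ, thetaE8⟫ = 0) : reflE γ h2 ∈ stabThetaE8 := by
  constructor
  · exact Subgroup.subset_closure ⟨γ, hγ, fun x => rfl⟩
  · show reflE γ h2 • thetaE8 = thetaE8
    show reflE γ h2 thetaE8 = thetaE8
    rw [reflE_apply, real_inner_comm, h0]
    simp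
/-! ### Chains of reflections -/

def canonD (t : ℤ) : Fin 8 → ℤ :=
  if t = 4 then ![0,0,0,0,0,0,2,2] else if t = 2 then ![0,0,0,0,0,2,2,0]
  else if t = 0 then ![2,2,0,0,0,0,0,0] else if t = -2 then ![0,0,0,0,0,-2,-2,0]
  else ![0,0,0,0,0,0,-2,-2]

def stepD (d γ : Fin 8 → ℤ) : Fin 8 → ℤ := fun i => d i - dotZ8 d γ / 4 * γ i

def okMove (d γ : Fin 8 → ℤ) : Bool :=
  isRootB γ && decide (γ 6 + γ 7 = 0) && decide (dotZ8 d γ % 4 = 0)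

def validChain : List (Fin 8 → ℤ) → (Fin 8 → ℤ) → Bool
  | [], d => decide (d = canonD (d 6 + d 7))
  | γ :: l, d => okMove d γ && validChain l (stepD d γ)

lemma toR_stepD {d γ : Fin 8 → ℤ} (k : ℤ) (hk : dotZ8 d γ = 4 * k) :
    toR (stepD d γ) = toR d - (k : ℝ) • toR γ := by
  ext i
  have h4 : dotZ8 d γ / 4 = k := by omega
  show toR (stepD d γ) i = toR d i - (k : ℝ) * toR γ i
  simp only [toR_apply, stepD, h4]
  push_cast
  ring

lemma reach : ∀ (l : List (Fin 8 → ℤ)) (d : Fin 8 → ℤ), validChain l d = true →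
    ∃ g ∈ stabThetaE8, g (toR d) = toR (canonD (d 6 + d 7))
  | [], d => by
    intro h
    have hd : d = canonD (d 6 + d 7) := by
      have : decide (d = canonD (d 6 + d 7)) = true := h
      exact of_decide_eq_true this
    exact ⟨1, one_mem _, by rw [← hd]; rfl⟩
  | γ :: l, d => by
    intro h
    simp only [validChain, Bool.and_eq_true] at h
    obtain ⟨hok, hrest⟩ := h
    simp only [okMove, Bool.and_eq_true, decide_eq_true_eq] at hok
    obtain ⟨⟨hroot, hlev⟩, hdvd⟩ := hok
    obtain ⟨k, hk⟩ : 4 ∣ dotZ8 d γ := Int.dvd_of_emod_eq_zero hdvd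
    have h88 : dotZ8 γ γ = 8 := by
      have := hroot
      simp only [isRootB, Bool.and_eq_true, Bool.or_eq_true, decide_eq_true_eq] at this
      exact this.1.1
    have h2 : ⟪toR γ, toR γ⟫ = 2 := by rw [inner_toR, h88]; norm_num
    have h0 : ⟪toR γ, thetaE8⟫ = 0 := by
      rw [inner_theta, hlev]; norm_num
    obtain ⟨g, hgH, hg⟩ := reach l (stepD d γ) hrest
    refine ⟨g * reflE (toR γ) h2, mul_mem hgH (reflE_mem (toR_mem hroot) h2 h0), ?_⟩
    have hstep : reflE (toR γ) h2 (toR d) = toR (stepD d γ) := by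
      rw [reflE_apply, toR_stepD k hk, inner_toR, hk]
      push_cast
      norm_num
    have hlevpres : stepD d γ 6 + stepD d γ 7 = d 6 + d 7 := by
      have h6 : γ 6 = - γ 7 := by omega
      simp only [stepD, h6]; ring
    calc (g * reflE (toR γ) h2) (toR d) = g (reflE (toR γ) h2 (toR d)) := rfl
      _ = toR (canonD (stepD d γ 6 + stepD d γ 7)) := by rw [hstep, hg]
      _ = toR (canonD (d 6 + d 7)) := by rw [hlevpres]
def mkV (a b c d e f g h : ℤ) : Fin 8 → ℤ := ![a,b,c,d,e,f,g,h]

def pairsE8c0 : List ((Fin 8 → ℤ) × List (Fin 8 → ℤ)) := [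
  (mkV 2 2 0 0 0 0 0 0, []),
  (mkV 2 (-2) 0 0 0 0 0 0, [mkV 0 2 (-2) 0 0 0 0 0, mkV 0 2 2 0 0 0 0 0]),
  (mkV (-2) 2 0 0 0 0 0 0, [mkV 2 0 (-2) 0 0 0 0 0, mkV 2 0 2 0 0 0 0 0]),
  (mkV (-2) (-2) 0 0 0 0 0 0, [mkV 2 2 0 0 0 0 0 0]),
  (mkV 2 0 2 0 0 0 0 0, [mkV 0 2 (-2) 0 0 0 0 0]),
  (mkV 2 0 (-2) 0 0 0 0 0, [mkV 0 2 2 0 0 0 0 0]),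
  (mkV (-2) 0 2 0 0 0 0 0, [mkV 0 2 2 0 0 0 0 0, mkV 2 2 0 0 0 0 0 0]),
  (mkV (-2) 0 (-2) 0 0 0 0 0, [mkV 0 2 (-2) 0 0 0 0 0, mkV 2 2 0 0 0 0 0 0]),
  (mkV 2 0 0 2 0 0 0 0, [mkV 0 2 0 (-2) 0 0 0 0]),
  (mkV 2 0 0 (-2) 0 0 0 0, [mkV 0 2 0 2 0 0 0 0]),
  (mkV (-2) 0 0 2 0 0 0 0, [mkV 0 2 0 2 0 0 0 0, mkV 2 2 0 0 0 0 0 0]),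
  (mkV (-2) 0 0 (-2) 0 0 0 0, [mkV 0 2 0 (-2) 0 0 0 0, mkV 2 2 0 0 0 0 0 0]),
  (mkV 2 0 0 0 2 0 0 0, [mkV 0 2 0 0 (-2) 0 0 0]),
  (mkV 2 0 0 0 (-2) 0 0 0, [mkV 0 2 0 0 2 0 0 0]),
  (mkV (-2) 0 0 0 2 0 0 0, [mkV 0 2 0 0 2 0 0 0, mkV 2 2 0 0 0 0 0 0]),
  (mkV (-2) 0 0 0 (-2) 0 0 0, [mkV 0 2 0 0 (-2) 0 0 0, mkV 2 2 0 0 0 0 0 0]),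
  (mkV 2 0 0 0 0 2 0 0, [mkV 0 2 0 0 0 (-2) 0 0]),
  (mkV 2 0 0 0 0 (-2) 0 0, [mkV 0 2 0 0 0 2 0 0]),
  (mkV (-2) 0 0 0 0 2 0 0, [mkV 0 2 0 0 0 2 0 0, mkV 2 2 0 0 0 0 0 0]),
  (mkV (-2) 0 0 0 0 (-2) 0 0, [mkV 0 2 0 0 0 (-2) 0 0, mkV 2 2 0 0 0 0 0 0]),
  (mkV 2 0 0 0 0 0 2 0, [mkV 2 0 0 0 0 (-2) 0 0]),
  (mkV 2 0 0 0 0 0 (-2) 0, [mkV 2 0 0 0 0 2 0 0]),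
  (mkV (-2) 0 0 0 0 0 2 0, [mkV 2 0 0 0 0 2 0 0]),
  (mkV (-2) 0 0 0 0 0 (-2) 0, [mkV 2 0 0 0 0 (-2) 0 0]),
  (mkV 2 0 0 0 0 0 0 2, [mkV 0 0 0 0 0 0 2 (-2), mkV 2 0 0 0 0 (-2) 0 0]),
  (mkV 2 0 0 0 0 0 0 (-2), [mkV 0 0 0 0 0 0 2 (-2), mkV 2 0 0 0 0 2 0 0]),
  (mkV (-2) 0 0 0 0 0 0 2, [mkV 0 0 0 0 0 0 2 (-2), mkV 2 0 0 0 0 2 0 0]),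
  (mkV (-2) 0 0 0 0 0 0 (-2), [mkV 0 0 0 0 0 0 2 (-2), mkV 2 0 0 0 0 (-2) 0 0]),
  (mkV 0 2 2 0 0 0 0 0, [mkV 2 0 (-2) 0 0 0 0 0]),
  (mkV 0 2 (-2) 0 0 0 0 0, [mkV 2 0 2 0 0 0 0 0])]

def pairsE8c1 : List ((Fin 8 → ℤ) × List (Fin 8 → ℤ)) := [
  (mkV 0 (-2) 2 0 0 0 0 0, [mkV 2 0 2 0 0 0 0 0, mkV 2 2 0 0 0 0 0 0]),
  (mkV 0 (-2) (-2) 0 0 0 0 0, [mkV 2 0 (-2) 0 0 0 0 0, mkV 2 2 0 0 0 0 0 0]),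
  (mkV 0 2 0 2 0 0 0 0, [mkV 2 0 0 (-2) 0 0 0 0]),
  (mkV 0 2 0 (-2) 0 0 0 0, [mkV 2 0 0 2 0 0 0 0]),
  (mkV 0 (-2) 0 2 0 0 0 0, [mkV 2 0 0 2 0 0 0 0, mkV 2 2 0 0 0 0 0 0]),
  (mkV 0 (-2) 0 (-2) 0 0 0 0, [mkV 2 0 0 (-2) 0 0 0 0, mkV 2 2 0 0 0 0 0 0]),
  (mkV 0 2 0 0 2 0 0 0, [mkV 2 0 0 0 (-2) 0 0 0]),
  (mkV 0 2 0 0 (-2) 0 0 0, [mkV 2 0 0 0 2 0 0 0]),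
  (mkV 0 (-2) 0 0 2 0 0 0, [mkV 2 0 0 0 2 0 0 0, mkV 2 2 0 0 0 0 0 0]),
  (mkV 0 (-2) 0 0 (-2) 0 0 0, [mkV 2 0 0 0 (-2) 0 0 0, mkV 2 2 0 0 0 0 0 0]),
  (mkV 0 2 0 0 0 2 0 0, [mkV 2 0 0 0 0 (-2) 0 0]),
  (mkV 0 2 0 0 0 (-2) 0 0, [mkV 2 0 0 0 0 2 0 0]),
  (mkV 0 (-2) 0 0 0 2 0 0, [mkV 2 0 0 0 0 2 0 0, mkV 2 2 0 0 0 0 0 0]),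
  (mkV 0 (-2) 0 0 0 (-2) 0 0, [mkV 2 0 0 0 0 (-2) 0 0, mkV 2 2 0 0 0 0 0 0]),
  (mkV 0 2 0 0 0 0 2 0, [mkV 0 2 0 0 0 (-2) 0 0]),
  (mkV 0 2 0 0 0 0 (-2) 0, [mkV 0 2 0 0 0 2 0 0]),
  (mkV 0 (-2) 0 0 0 0 2 0, [mkV 0 2 0 0 0 2 0 0]),
  (mkV 0 (-2) 0 0 0 0 (-2) 0, [mkV 0 2 0 0 0 (-2) 0 0]),
  (mkV 0 2 0 0 0 0 0 2, [mkV 0 0 0 0 0 0 2 (-2), mkV 0 2 0 0 0 (-2) 0 0]),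
  (mkV 0 2 0 0 0 0 0 (-2), [mkV 0 0 0 0 0 0 2 (-2), mkV 0 2 0 0 0 2 0 0]),
  (mkV 0 (-2) 0 0 0 0 0 2, [mkV 0 0 0 0 0 0 2 (-2), mkV 0 2 0 0 0 2 0 0]),
  (mkV 0 (-2) 0 0 0 0 0 (-2), [mkV 0 0 0 0 0 0 2 (-2), mkV 0 2 0 0 0 (-2) 0 0]),
  (mkV 0 0 2 2 0 0 0 0, [mkV 0 2 0 (-2) 0 0 0 0, mkV 2 0 (-2) 0 0 0 0 0]),
  (mkV 0 0 2 (-2) 0 0 0 0, [mkV 0 2 0 2 0 0 0 0, mkV 2 0 (-2) 0 0 0 0 0]),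
  (mkV 0 0 (-2) 2 0 0 0 0, [mkV 0 2 0 (-2) 0 0 0 0, mkV 2 0 2 0 0 0 0 0]),
  (mkV 0 0 (-2) (-2) 0 0 0 0, [mkV 0 2 0 2 0 0 0 0, mkV 2 0 2 0 0 0 0 0]),
  (mkV 0 0 2 0 2 0 0 0, [mkV 0 2 0 0 (-2) 0 0 0, mkV 2 0 (-2) 0 0 0 0 0]),
  (mkV 0 0 2 0 (-2) 0 0 0, [mkV 0 2 0 0 2 0 0 0, mkV 2 0 (-2) 0 0 0 0 0]),
  (mkV 0 0 (-2) 0 2 0 0 0, [mkV 0 2 0 0 (-2) 0 0 0, mkV 2 0 2 0 0 0 0 0]),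
  (mkV 0 0 (-2) 0 (-2) 0 0 0, [mkV 0 2 0 0 2 0 0 0, mkV 2 0 2 0 0 0 0 0])]

def pairsE8c2 : List ((Fin 8 → ℤ) × List (Fin 8 → ℤ)) := [
  (mkV 0 0 2 0 0 2 0 0, [mkV 0 2 0 0 0 (-2) 0 0, mkV 2 0 (-2) 0 0 0 0 0]),
  (mkV 0 0 2 0 0 (-2) 0 0, [mkV 0 2 0 0 0 2 0 0, mkV 2 0 (-2) 0 0 0 0 0]),
  (mkV 0 0 (-2) 0 0 2 0 0, [mkV 0 2 0 0 0 (-2) 0 0, mkV 2 0 2 0 0 0 0 0]),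
  (mkV 0 0 (-2) 0 0 (-2) 0 0, [mkV 0 2 0 0 0 2 0 0, mkV 2 0 2 0 0 0 0 0]),
  (mkV 0 0 2 0 0 0 2 0, [mkV 0 0 2 0 0 (-2) 0 0]),
  (mkV 0 0 2 0 0 0 (-2) 0, [mkV 0 0 2 0 0 2 0 0]),
  (mkV 0 0 (-2) 0 0 0 2 0, [mkV 0 0 2 0 0 2 0 0]),
  (mkV 0 0 (-2) 0 0 0 (-2) 0, [mkV 0 0 2 0 0 (-2) 0 0]),
  (mkV 0 0 2 0 0 0 0 2, [mkV 0 0 0 0 0 0 2 (-2), mkV 0 0 2 0 0 (-2) 0 0]),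
  (mkV 0 0 2 0 0 0 0 (-2), [mkV 0 0 0 0 0 0 2 (-2), mkV 0 0 2 0 0 2 0 0]),
  (mkV 0 0 (-2) 0 0 0 0 2, [mkV 0 0 0 0 0 0 2 (-2), mkV 0 0 2 0 0 2 0 0]),
  (mkV 0 0 (-2) 0 0 0 0 (-2), [mkV 0 0 0 0 0 0 2 (-2), mkV 0 0 2 0 0 (-2) 0 0]),
  (mkV 0 0 0 2 2 0 0 0, [mkV 0 2 0 0 (-2) 0 0 0, mkV 2 0 0 (-2) 0 0 0 0]),
  (mkV 0 0 0 2 (-2) 0 0 0, [mkV 0 2 0 0 2 0 0 0, mkV 2 0 0 (-2) 0 0 0 0]),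
  (mkV 0 0 0 (-2) 2 0 0 0, [mkV 0 2 0 0 (-2) 0 0 0, mkV 2 0 0 2 0 0 0 0]),
  (mkV 0 0 0 (-2) (-2) 0 0 0, [mkV 0 2 0 0 2 0 0 0, mkV 2 0 0 2 0 0 0 0]),
  (mkV 0 0 0 2 0 2 0 0, [mkV 0 2 0 0 0 (-2) 0 0, mkV 2 0 0 (-2) 0 0 0 0]),
  (mkV 0 0 0 2 0 (-2) 0 0, [mkV 0 2 0 0 0 2 0 0, mkV 2 0 0 (-2) 0 0 0 0]),
  (mkV 0 0 0 (-2) 0 2 0 0, [mkV 0 2 0 0 0 (-2) 0 0, mkV 2 0 0 2 0 0 0 0]),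
  (mkV 0 0 0 (-2) 0 (-2) 0 0, [mkV 0 2 0 0 0 2 0 0, mkV 2 0 0 2 0 0 0 0]),
  (mkV 0 0 0 2 0 0 2 0, [mkV 0 0 0 2 0 (-2) 0 0]),
  (mkV 0 0 0 2 0 0 (-2) 0, [mkV 0 0 0 2 0 2 0 0]),
  (mkV 0 0 0 (-2) 0 0 2 0, [mkV 0 0 0 2 0 2 0 0]),
  (mkV 0 0 0 (-2) 0 0 (-2) 0, [mkV 0 0 0 2 0 (-2) 0 0]),
  (mkV 0 0 0 2 0 0 0 2, [mkV 0 0 0 0 0 0 2 (-2), mkV 0 0 0 2 0 (-2) 0 0]),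
  (mkV 0 0 0 2 0 0 0 (-2), [mkV 0 0 0 0 0 0 2 (-2), mkV 0 0 0 2 0 2 0 0]),
  (mkV 0 0 0 (-2) 0 0 0 2, [mkV 0 0 0 0 0 0 2 (-2), mkV 0 0 0 2 0 2 0 0]),
  (mkV 0 0 0 (-2) 0 0 0 (-2), [mkV 0 0 0 0 0 0 2 (-2), mkV 0 0 0 2 0 (-2) 0 0]),
  (mkV 0 0 0 0 2 2 0 0, [mkV 0 2 0 0 0 (-2) 0 0, mkV 2 0 0 0 (-2) 0 0 0]),
  (mkV 0 0 0 0 2 (-2) 0 0, [mkV 0 2 0 0 0 2 0 0, mkV 2 0 0 0 (-2) 0 0 0])]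

def pairsE8c3 : List ((Fin 8 → ℤ) × List (Fin 8 → ℤ)) := [
  (mkV 0 0 0 0 (-2) 2 0 0, [mkV 0 2 0 0 0 (-2) 0 0, mkV 2 0 0 0 2 0 0 0]),
  (mkV 0 0 0 0 (-2) (-2) 0 0, [mkV 0 2 0 0 0 2 0 0, mkV 2 0 0 0 2 0 0 0]),
  (mkV 0 0 0 0 2 0 2 0, [mkV 0 0 0 0 2 (-2) 0 0]),
  (mkV 0 0 0 0 2 0 (-2) 0, [mkV 0 0 0 0 2 2 0 0]),
  (mkV 0 0 0 0 (-2) 0 2 0, [mkV 0 0 0 0 2 2 0 0]),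
  (mkV 0 0 0 0 (-2) 0 (-2) 0, [mkV 0 0 0 0 2 (-2) 0 0]),
  (mkV 0 0 0 0 2 0 0 2, [mkV 0 0 0 0 0 0 2 (-2), mkV 0 0 0 0 2 (-2) 0 0]),
  (mkV 0 0 0 0 2 0 0 (-2), [mkV 0 0 0 0 0 0 2 (-2), mkV 0 0 0 0 2 2 0 0]),
  (mkV 0 0 0 0 (-2) 0 0 2, [mkV 0 0 0 0 0 0 2 (-2), mkV 0 0 0 0 2 2 0 0]),
  (mkV 0 0 0 0 (-2) 0 0 (-2), [mkV 0 0 0 0 0 0 2 (-2), mkV 0 0 0 0 2 (-2) 0 0]),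
  (mkV 0 0 0 0 0 2 2 0, []),
  (mkV 0 0 0 0 0 2 (-2) 0, [mkV 2 0 0 0 0 (-2) 0 0, mkV 2 0 0 0 0 2 0 0]),
  (mkV 0 0 0 0 0 (-2) 2 0, [mkV 2 0 0 0 0 (-2) 0 0, mkV 2 0 0 0 0 2 0 0]),
  (mkV 0 0 0 0 0 (-2) (-2) 0, []),
  (mkV 0 0 0 0 0 2 0 2, [mkV 0 0 0 0 0 0 2 (-2)]),
  (mkV 0 0 0 0 0 2 0 (-2), [mkV 0 0 0 0 0 0 2 (-2), mkV 2 0 0 0 0 (-2) 0 0, mkV 2 0 0 0 0 2 0 0]),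
  (mkV 0 0 0 0 0 (-2) 0 2, [mkV 0 0 0 0 0 0 2 (-2), mkV 2 0 0 0 0 (-2) 0 0, mkV 2 0 0 0 0 2 0 0]),
  (mkV 0 0 0 0 0 (-2) 0 (-2), [mkV 0 0 0 0 0 0 2 (-2)]),
  (mkV 0 0 0 0 0 0 2 2, []),
  (mkV 0 0 0 0 0 0 2 (-2), [mkV 1 1 (-1) (-1) (-1) 1 (-1) 1, mkV 1 1 1 1 1 (-1) (-1) 1]),
  (mkV 0 0 0 0 0 0 (-2) 2, [mkV 1 1 (-1) (-1) (-1) 1 1 (-1), mkV 1 1 1 1 1 (-1) 1 (-1)]),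
  (mkV 0 0 0 0 0 0 (-2) (-2), []),
  (mkV 1 1 1 1 1 1 1 1, [mkV 1 1 1 1 1 (-1) (-1) 1]),
  (mkV 1 1 1 1 1 1 (-1) (-1), [mkV 1 (-1) (-1) (-1) (-1) (-1) (-1) 1, mkV 2 0 0 0 0 2 0 0]),
  (mkV 1 1 1 1 1 (-1) 1 (-1), [mkV 1 1 (-1) (-1) (-1) 1 (-1) 1]),
  (mkV 1 1 1 1 1 (-1) (-1) 1, [mkV 1 1 (-1) (-1) (-1) 1 1 (-1)]),
  (mkV 1 1 1 1 (-1) 1 1 (-1), [mkV 1 1 (-1) (-1) 1 (-1) (-1) 1]),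
  (mkV 1 1 1 1 (-1) 1 (-1) 1, [mkV 1 1 (-1) (-1) 1 (-1) 1 (-1)]),
  (mkV 1 1 1 1 (-1) (-1) 1 1, [mkV 1 (-1) (-1) (-1) 1 1 1 (-1), mkV 2 0 0 0 0 (-2) 0 0]),
  (mkV 1 1 1 1 (-1) (-1) (-1) (-1), [mkV 1 1 1 1 (-1) 1 1 (-1)])]

def pairsE8c4 : List ((Fin 8 → ℤ) × List (Fin 8 → ℤ)) := [
  (mkV 1 1 1 (-1) 1 1 1 (-1), [mkV 1 1 (-1) 1 (-1) (-1) (-1) 1]),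
  (mkV 1 1 1 (-1) 1 1 (-1) 1, [mkV 1 1 (-1) 1 (-1) (-1) 1 (-1)]),
  (mkV 1 1 1 (-1) 1 (-1) 1 1, [mkV 1 (-1) (-1) 1 (-1) 1 1 (-1), mkV 2 0 0 0 0 (-2) 0 0]),
  (mkV 1 1 1 (-1) 1 (-1) (-1) (-1), [mkV 1 1 1 (-1) 1 1 1 (-1)]),
  (mkV 1 1 1 (-1) (-1) 1 1 1, [mkV 1 1 1 (-1) (-1) (-1) (-1) 1]),
  (mkV 1 1 1 (-1) (-1) 1 (-1) (-1), [mkV 1 (-1) (-1) 1 1 (-1) (-1) 1, mkV 2 0 0 0 0 2 0 0]),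
  (mkV 1 1 1 (-1) (-1) (-1) 1 (-1), [mkV 1 1 (-1) 1 1 1 (-1) 1]),
  (mkV 1 1 1 (-1) (-1) (-1) (-1) 1, [mkV 1 1 (-1) 1 1 1 1 (-1)]),
  (mkV 1 1 (-1) 1 1 1 1 (-1), [mkV 1 1 1 (-1) (-1) (-1) (-1) 1]),
  (mkV 1 1 (-1) 1 1 1 (-1) 1, [mkV 1 1 1 (-1) (-1) (-1) 1 (-1)]),
  (mkV 1 1 (-1) 1 1 (-1) 1 1, [mkV 1 (-1) 1 (-1) (-1) 1 1 (-1), mkV 2 0 0 0 0 (-2) 0 0]),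
  (mkV 1 1 (-1) 1 1 (-1) (-1) (-1), [mkV 1 1 (-1) 1 1 1 1 (-1)]),
  (mkV 1 1 (-1) 1 (-1) 1 1 1, [mkV 1 1 (-1) 1 (-1) (-1) (-1) 1]),
  (mkV 1 1 (-1) 1 (-1) 1 (-1) (-1), [mkV 1 (-1) 1 (-1) 1 (-1) (-1) 1, mkV 2 0 0 0 0 2 0 0]),
  (mkV 1 1 (-1) 1 (-1) (-1) 1 (-1), [mkV 1 1 1 (-1) 1 1 (-1) 1]),
  (mkV 1 1 (-1) 1 (-1) (-1) (-1) 1, [mkV 1 1 1 (-1) 1 1 1 (-1)]),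
  (mkV 1 1 (-1) (-1) 1 1 1 1, [mkV 1 1 (-1) (-1) 1 (-1) (-1) 1]),
  (mkV 1 1 (-1) (-1) 1 1 (-1) (-1), [mkV 1 (-1) 1 1 (-1) (-1) (-1) 1, mkV 2 0 0 0 0 2 0 0]),
  (mkV 1 1 (-1) (-1) 1 (-1) 1 (-1), [mkV 1 1 1 1 (-1) 1 (-1) 1]),
  (mkV 1 1 (-1) (-1) 1 (-1) (-1) 1, [mkV 1 1 1 1 (-1) 1 1 (-1)]),
  (mkV 1 1 (-1) (-1) (-1) 1 1 (-1), [mkV 1 1 1 1 1 (-1) (-1) 1]),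
  (mkV 1 1 (-1) (-1) (-1) 1 (-1) 1, [mkV 1 1 1 1 1 (-1) 1 (-1)]),
  (mkV 1 1 (-1) (-1) (-1) (-1) 1 1, [mkV 1 (-1) 1 1 1 1 1 (-1), mkV 2 0 0 0 0 (-2) 0 0]),
  (mkV 1 1 (-1) (-1) (-1) (-1) (-1) (-1), [mkV 1 1 (-1) (-1) (-1) 1 1 (-1)]),
  (mkV 1 (-1) 1 1 1 1 1 (-1), [mkV 1 1 1 (-1) (-1) (-1) (-1) 1, mkV 0 2 (-2) 0 0 0 0 0]),
  (mkV 1 (-1) 1 1 1 1 (-1) 1, [mkV 1 1 1 (-1) (-1) (-1) 1 (-1), mkV 0 2 (-2) 0 0 0 0 0]),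
  (mkV 1 (-1) 1 1 1 (-1) 1 1, [mkV 1 1 (-1) (-1) (-1) 1 1 (-1), mkV 2 0 0 0 0 (-2) 0 0]),
  (mkV 1 (-1) 1 1 1 (-1) (-1) (-1), [mkV 1 (-1) 1 1 1 1 1 (-1)]),
  (mkV 1 (-1) 1 1 (-1) 1 1 1, [mkV 1 (-1) 1 1 (-1) (-1) (-1) 1]),
  (mkV 1 (-1) 1 1 (-1) 1 (-1) (-1), [mkV 1 1 (-1) (-1) 1 (-1) (-1) 1, mkV 2 0 0 0 0 2 0 0])]

def pairsE8c5 : List ((Fin 8 → ℤ) × List (Fin 8 → ℤ)) := [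
  (mkV 1 (-1) 1 1 (-1) (-1) 1 (-1), [mkV 1 1 1 (-1) 1 1 (-1) 1, mkV 0 2 (-2) 0 0 0 0 0]),
  (mkV 1 (-1) 1 1 (-1) (-1) (-1) 1, [mkV 1 1 1 (-1) 1 1 1 (-1), mkV 0 2 (-2) 0 0 0 0 0]),
  (mkV 1 (-1) 1 (-1) 1 1 1 1, [mkV 1 (-1) 1 (-1) 1 (-1) (-1) 1]),
  (mkV 1 (-1) 1 (-1) 1 1 (-1) (-1), [mkV 1 1 (-1) 1 (-1) (-1) (-1) 1, mkV 2 0 0 0 0 2 0 0]),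
  (mkV 1 (-1) 1 (-1) 1 (-1) 1 (-1), [mkV 1 1 1 1 (-1) 1 (-1) 1, mkV 0 2 (-2) 0 0 0 0 0]),
  (mkV 1 (-1) 1 (-1) 1 (-1) (-1) 1, [mkV 1 1 1 1 (-1) 1 1 (-1), mkV 0 2 (-2) 0 0 0 0 0]),
  (mkV 1 (-1) 1 (-1) (-1) 1 1 (-1), [mkV 1 1 1 1 1 (-1) (-1) 1, mkV 0 2 (-2) 0 0 0 0 0]),
  (mkV 1 (-1) 1 (-1) (-1) 1 (-1) 1, [mkV 1 1 1 1 1 (-1) 1 (-1), mkV 0 2 (-2) 0 0 0 0 0]),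
  (mkV 1 (-1) 1 (-1) (-1) (-1) 1 1, [mkV 1 1 (-1) 1 1 1 1 (-1), mkV 2 0 0 0 0 (-2) 0 0]),
  (mkV 1 (-1) 1 (-1) (-1) (-1) (-1) (-1), [mkV 1 (-1) 1 (-1) (-1) 1 1 (-1)]),
  (mkV 1 (-1) (-1) 1 1 1 1 1, [mkV 1 (-1) (-1) 1 1 (-1) (-1) 1]),
  (mkV 1 (-1) (-1) 1 1 1 (-1) (-1), [mkV 1 1 1 (-1) (-1) (-1) (-1) 1, mkV 2 0 0 0 0 2 0 0]),
  (mkV 1 (-1) (-1) 1 1 (-1) 1 (-1), [mkV 1 1 (-1) (-1) (-1) 1 (-1) 1, mkV 0 2 2 0 0 0 0 0]),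
  (mkV 1 (-1) (-1) 1 1 (-1) (-1) 1, [mkV 1 1 (-1) (-1) (-1) 1 1 (-1), mkV 0 2 2 0 0 0 0 0]),
  (mkV 1 (-1) (-1) 1 (-1) 1 1 (-1), [mkV 1 1 (-1) (-1) 1 (-1) (-1) 1, mkV 0 2 2 0 0 0 0 0]),
  (mkV 1 (-1) (-1) 1 (-1) 1 (-1) 1, [mkV 1 1 (-1) (-1) 1 (-1) 1 (-1), mkV 0 2 2 0 0 0 0 0]),
  (mkV 1 (-1) (-1) 1 (-1) (-1) 1 1, [mkV 1 1 1 (-1) 1 1 1 (-1), mkV 2 0 0 0 0 (-2) 0 0]),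
  (mkV 1 (-1) (-1) 1 (-1) (-1) (-1) (-1), [mkV 1 (-1) (-1) 1 (-1) 1 1 (-1)]),
  (mkV 1 (-1) (-1) (-1) 1 1 1 (-1), [mkV 1 1 (-1) 1 (-1) (-1) (-1) 1, mkV 0 2 2 0 0 0 0 0]),
  (mkV 1 (-1) (-1) (-1) 1 1 (-1) 1, [mkV 1 1 (-1) 1 (-1) (-1) 1 (-1), mkV 0 2 2 0 0 0 0 0]),
  (mkV 1 (-1) (-1) (-1) 1 (-1) 1 1, [mkV 1 1 1 1 (-1) 1 1 (-1), mkV 2 0 0 0 0 (-2) 0 0]),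
  (mkV 1 (-1) (-1) (-1) 1 (-1) (-1) (-1), [mkV 1 (-1) (-1) (-1) 1 1 1 (-1)]),
  (mkV 1 (-1) (-1) (-1) (-1) 1 1 1, [mkV 1 (-1) (-1) (-1) (-1) (-1) (-1) 1]),
  (mkV 1 (-1) (-1) (-1) (-1) 1 (-1) (-1), [mkV 1 1 1 1 1 (-1) (-1) 1, mkV 2 0 0 0 0 2 0 0]),
  (mkV 1 (-1) (-1) (-1) (-1) (-1) 1 (-1), [mkV 1 1 (-1) 1 1 1 (-1) 1, mkV 0 2 2 0 0 0 0 0]),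
  (mkV 1 (-1) (-1) (-1) (-1) (-1) (-1) 1, [mkV 1 1 (-1) 1 1 1 1 (-1), mkV 0 2 2 0 0 0 0 0]),
  (mkV (-1) 1 1 1 1 1 1 (-1), [mkV 1 1 1 (-1) (-1) (-1) (-1) 1, mkV 2 0 (-2) 0 0 0 0 0]),
  (mkV (-1) 1 1 1 1 1 (-1) 1, [mkV 1 1 1 (-1) (-1) (-1) 1 (-1), mkV 2 0 (-2) 0 0 0 0 0]),
  (mkV (-1) 1 1 1 1 (-1) 1 1, [mkV 1 1 1 1 1 (-1) (-1) 1, mkV 2 0 0 0 0 2 0 0]),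
  (mkV (-1) 1 1 1 1 (-1) (-1) (-1), [mkV 1 (-1) (-1) (-1) (-1) (-1) (-1) 1])]

def pairsE8c6 : List ((Fin 8 → ℤ) × List (Fin 8 → ℤ)) := [
  (mkV (-1) 1 1 1 (-1) 1 1 1, [mkV 1 (-1) (-1) (-1) 1 1 1 (-1)]),
  (mkV (-1) 1 1 1 (-1) 1 (-1) (-1), [mkV 1 1 1 1 (-1) 1 1 (-1), mkV 2 0 0 0 0 (-2) 0 0]),
  (mkV (-1) 1 1 1 (-1) (-1) 1 (-1), [mkV 1 1 1 (-1) 1 1 (-1) 1, mkV 2 0 (-2) 0 0 0 0 0]),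
  (mkV (-1) 1 1 1 (-1) (-1) (-1) 1, [mkV 1 1 1 (-1) 1 1 1 (-1), mkV 2 0 (-2) 0 0 0 0 0]),
  (mkV (-1) 1 1 (-1) 1 1 1 1, [mkV 1 (-1) (-1) 1 (-1) 1 1 (-1)]),
  (mkV (-1) 1 1 (-1) 1 1 (-1) (-1), [mkV 1 1 1 (-1) 1 1 1 (-1), mkV 2 0 0 0 0 (-2) 0 0]),
  (mkV (-1) 1 1 (-1) 1 (-1) 1 (-1), [mkV 1 1 1 1 (-1) 1 (-1) 1, mkV 2 0 (-2) 0 0 0 0 0]),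
  (mkV (-1) 1 1 (-1) 1 (-1) (-1) 1, [mkV 1 1 1 1 (-1) 1 1 (-1), mkV 2 0 (-2) 0 0 0 0 0]),
  (mkV (-1) 1 1 (-1) (-1) 1 1 (-1), [mkV 1 1 1 1 1 (-1) (-1) 1, mkV 2 0 (-2) 0 0 0 0 0]),
  (mkV (-1) 1 1 (-1) (-1) 1 (-1) 1, [mkV 1 1 1 1 1 (-1) 1 (-1), mkV 2 0 (-2) 0 0 0 0 0]),
  (mkV (-1) 1 1 (-1) (-1) (-1) 1 1, [mkV 1 1 1 (-1) (-1) (-1) (-1) 1, mkV 2 0 0 0 0 2 0 0]),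
  (mkV (-1) 1 1 (-1) (-1) (-1) (-1) (-1), [mkV 1 (-1) (-1) 1 1 (-1) (-1) 1]),
  (mkV (-1) 1 (-1) 1 1 1 1 1, [mkV 1 (-1) 1 (-1) (-1) 1 1 (-1)]),
  (mkV (-1) 1 (-1) 1 1 1 (-1) (-1), [mkV 1 1 (-1) 1 1 1 1 (-1), mkV 2 0 0 0 0 (-2) 0 0]),
  (mkV (-1) 1 (-1) 1 1 (-1) 1 (-1), [mkV 1 1 (-1) (-1) (-1) 1 (-1) 1, mkV 2 0 2 0 0 0 0 0]),
  (mkV (-1) 1 (-1) 1 1 (-1) (-1) 1, [mkV 1 1 (-1) (-1) (-1) 1 1 (-1), mkV 2 0 2 0 0 0 0 0]),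
  (mkV (-1) 1 (-1) 1 (-1) 1 1 (-1), [mkV 1 1 (-1) (-1) 1 (-1) (-1) 1, mkV 2 0 2 0 0 0 0 0]),
  (mkV (-1) 1 (-1) 1 (-1) 1 (-1) 1, [mkV 1 1 (-1) (-1) 1 (-1) 1 (-1), mkV 2 0 2 0 0 0 0 0]),
  (mkV (-1) 1 (-1) 1 (-1) (-1) 1 1, [mkV 1 1 (-1) 1 (-1) (-1) (-1) 1, mkV 2 0 0 0 0 2 0 0]),
  (mkV (-1) 1 (-1) 1 (-1) (-1) (-1) (-1), [mkV 1 (-1) 1 (-1) 1 (-1) (-1) 1]),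
  (mkV (-1) 1 (-1) (-1) 1 1 1 (-1), [mkV 1 1 (-1) 1 (-1) (-1) (-1) 1, mkV 2 0 2 0 0 0 0 0]),
  (mkV (-1) 1 (-1) (-1) 1 1 (-1) 1, [mkV 1 1 (-1) 1 (-1) (-1) 1 (-1), mkV 2 0 2 0 0 0 0 0]),
  (mkV (-1) 1 (-1) (-1) 1 (-1) 1 1, [mkV 1 1 (-1) (-1) 1 (-1) (-1) 1, mkV 2 0 0 0 0 2 0 0]),
  (mkV (-1) 1 (-1) (-1) 1 (-1) (-1) (-1), [mkV 1 (-1) 1 1 (-1) (-1) (-1) 1]),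
  (mkV (-1) 1 (-1) (-1) (-1) 1 1 1, [mkV 1 (-1) 1 1 1 1 1 (-1)]),
  (mkV (-1) 1 (-1) (-1) (-1) 1 (-1) (-1), [mkV 1 1 (-1) (-1) (-1) 1 1 (-1), mkV 2 0 0 0 0 (-2) 0 0]),
  (mkV (-1) 1 (-1) (-1) (-1) (-1) 1 (-1), [mkV 1 1 (-1) 1 1 1 (-1) 1, mkV 2 0 2 0 0 0 0 0]),
  (mkV (-1) 1 (-1) (-1) (-1) (-1) (-1) 1, [mkV 1 1 (-1) 1 1 1 1 (-1), mkV 2 0 2 0 0 0 0 0]),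
  (mkV (-1) (-1) 1 1 1 1 1 1, [mkV 1 1 (-1) (-1) (-1) 1 1 (-1)]),
  (mkV (-1) (-1) 1 1 1 1 (-1) (-1), [mkV 1 (-1) 1 1 1 1 1 (-1), mkV 2 0 0 0 0 (-2) 0 0])]

def pairsE8c7 : List ((Fin 8 → ℤ) × List (Fin 8 → ℤ)) := [
  (mkV (-1) (-1) 1 1 1 (-1) 1 (-1), [mkV 1 1 1 1 1 (-1) 1 (-1), mkV 2 2 0 0 0 0 0 0]),
  (mkV (-1) (-1) 1 1 1 (-1) (-1) 1, [mkV 1 1 1 1 1 (-1) (-1) 1, mkV 2 2 0 0 0 0 0 0]),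
  (mkV (-1) (-1) 1 1 (-1) 1 1 (-1), [mkV 1 1 1 1 (-1) 1 1 (-1), mkV 2 2 0 0 0 0 0 0]),
  (mkV (-1) (-1) 1 1 (-1) 1 (-1) 1, [mkV 1 1 1 1 (-1) 1 (-1) 1, mkV 2 2 0 0 0 0 0 0]),
  (mkV (-1) (-1) 1 1 (-1) (-1) 1 1, [mkV 1 (-1) 1 1 (-1) (-1) (-1) 1, mkV 2 0 0 0 0 2 0 0]),
  (mkV (-1) (-1) 1 1 (-1) (-1) (-1) (-1), [mkV 1 1 (-1) (-1) 1 (-1) (-1) 1]),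
  (mkV (-1) (-1) 1 (-1) 1 1 1 (-1), [mkV 1 1 1 (-1) 1 1 1 (-1), mkV 2 2 0 0 0 0 0 0]),
  (mkV (-1) (-1) 1 (-1) 1 1 (-1) 1, [mkV 1 1 1 (-1) 1 1 (-1) 1, mkV 2 2 0 0 0 0 0 0]),
  (mkV (-1) (-1) 1 (-1) 1 (-1) 1 1, [mkV 1 (-1) 1 (-1) 1 (-1) (-1) 1, mkV 2 0 0 0 0 2 0 0]),
  (mkV (-1) (-1) 1 (-1) 1 (-1) (-1) (-1), [mkV 1 1 (-1) 1 (-1) (-1) (-1) 1]),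
  (mkV (-1) (-1) 1 (-1) (-1) 1 1 1, [mkV 1 1 (-1) 1 1 1 1 (-1)]),
  (mkV (-1) (-1) 1 (-1) (-1) 1 (-1) (-1), [mkV 1 (-1) 1 (-1) (-1) 1 1 (-1), mkV 2 0 0 0 0 (-2) 0 0]),
  (mkV (-1) (-1) 1 (-1) (-1) (-1) 1 (-1), [mkV 1 1 1 (-1) (-1) (-1) 1 (-1), mkV 2 2 0 0 0 0 0 0]),
  (mkV (-1) (-1) 1 (-1) (-1) (-1) (-1) 1, [mkV 1 1 1 (-1) (-1) (-1) (-1) 1, mkV 2 2 0 0 0 0 0 0]),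
  (mkV (-1) (-1) (-1) 1 1 1 1 (-1), [mkV 1 1 (-1) 1 1 1 1 (-1), mkV 2 2 0 0 0 0 0 0]),
  (mkV (-1) (-1) (-1) 1 1 1 (-1) 1, [mkV 1 1 (-1) 1 1 1 (-1) 1, mkV 2 2 0 0 0 0 0 0]),
  (mkV (-1) (-1) (-1) 1 1 (-1) 1 1, [mkV 1 (-1) (-1) 1 1 (-1) (-1) 1, mkV 2 0 0 0 0 2 0 0]),
  (mkV (-1) (-1) (-1) 1 1 (-1) (-1) (-1), [mkV 1 1 1 (-1) (-1) (-1) (-1) 1]),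
  (mkV (-1) (-1) (-1) 1 (-1) 1 1 1, [mkV 1 1 1 (-1) 1 1 1 (-1)]),
  (mkV (-1) (-1) (-1) 1 (-1) 1 (-1) (-1), [mkV 1 (-1) (-1) 1 (-1) 1 1 (-1), mkV 2 0 0 0 0 (-2) 0 0]),
  (mkV (-1) (-1) (-1) 1 (-1) (-1) 1 (-1), [mkV 1 1 (-1) 1 (-1) (-1) 1 (-1), mkV 2 2 0 0 0 0 0 0]),
  (mkV (-1) (-1) (-1) 1 (-1) (-1) (-1) 1, [mkV 1 1 (-1) 1 (-1) (-1) (-1) 1, mkV 2 2 0 0 0 0 0 0]),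
  (mkV (-1) (-1) (-1) (-1) 1 1 1 1, [mkV 1 1 1 1 (-1) 1 1 (-1)]),
  (mkV (-1) (-1) (-1) (-1) 1 1 (-1) (-1), [mkV 1 (-1) (-1) (-1) 1 1 1 (-1), mkV 2 0 0 0 0 (-2) 0 0]),
  (mkV (-1) (-1) (-1) (-1) 1 (-1) 1 (-1), [mkV 1 1 (-1) (-1) 1 (-1) 1 (-1), mkV 2 2 0 0 0 0 0 0]),
  (mkV (-1) (-1) (-1) (-1) 1 (-1) (-1) 1, [mkV 1 1 (-1) (-1) 1 (-1) (-1) 1, mkV 2 2 0 0 0 0 0 0]),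
  (mkV (-1) (-1) (-1) (-1) (-1) 1 1 (-1), [mkV 1 1 (-1) (-1) (-1) 1 1 (-1), mkV 2 2 0 0 0 0 0 0]),
  (mkV (-1) (-1) (-1) (-1) (-1) 1 (-1) 1, [mkV 1 1 (-1) (-1) (-1) 1 (-1) 1, mkV 2 2 0 0 0 0 0 0]),
  (mkV (-1) (-1) (-1) (-1) (-1) (-1) 1 1, [mkV 1 (-1) (-1) (-1) (-1) (-1) (-1) 1, mkV 2 0 0 0 0 2 0 0]),
  (mkV (-1) (-1) (-1) (-1) (-1) (-1) (-1) (-1), [mkV 1 1 1 1 1 (-1) (-1) 1])]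

def pairsE8 : List ((Fin 8 → ℤ) × List (Fin 8 → ℤ)) := pairsE8c0 ++ pairsE8c1 ++ pairsE8c2 ++ pairsE8c3 ++ pairsE8c4 ++ pairsE8c5 ++ pairsE8c6 ++ pairsE8c7
lemma mkV_eq (x : Fin 8 → ℤ) : mkV (x 0) (x 1) (x 2) (x 3) (x 4) (x 5) (x 6) (x 7) = x := by
  funext i; fin_cases i <;> rfl

set_option maxRecDepth 100000 in
set_option maxHeartbeats 4000000 in
lemma allChains : ∀ p ∈ pairsE8, validChain p.2 p.1 = true := by decide

set_option maxRecDepth 100000 in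
set_option maxHeartbeats 1000000 in
lemma pairs_level : ∀ p ∈ pairsE8,
    p.1 6 + p.1 7 = -4 ∨ p.1 6 + p.1 7 = -2 ∨ p.1 6 + p.1 7 = 0 ∨
    p.1 6 + p.1 7 = 2 ∨ p.1 6 + p.1 7 = 4 := by decide

set_option maxRecDepth 100000 in
set_option maxHeartbeats 10000000 in
lemma int_pattern : ∀ a b c d e f g h : Fin 3,
    ((a:ℤ)-1)*((a:ℤ)-1) + ((b:ℤ)-1)*((b:ℤ)-1) + ((c:ℤ)-1)*((c:ℤ)-1) + ((d:ℤ)-1)*((d:ℤ)-1) +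
    ((e:ℤ)-1)*((e:ℤ)-1) + ((f:ℤ)-1)*((f:ℤ)-1) + ((g:ℤ)-1)*((g:ℤ)-1) + ((h:ℤ)-1)*((h:ℤ)-1) = 2 →
    ∃ p ∈ pairsE8, p.1 = mkV (2*((a:ℤ)-1)) (2*((b:ℤ)-1)) (2*((c:ℤ)-1)) (2*((d:ℤ)-1))
      (2*((e:ℤ)-1)) (2*((f:ℤ)-1)) (2*((g:ℤ)-1)) (2*((h:ℤ)-1)) := by
  decide

def c2i (b : Bool) : ℤ := if b then 0 else -1

set_option maxRecDepth 100000 in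
set_option maxHeartbeats 4000000 in
lemma half_pattern : ∀ a b c d e f g h : Bool,
    2 ∣ (c2i a + c2i b + c2i c + c2i d + c2i e + c2i f + c2i g + c2i h) →
    ∃ p ∈ pairsE8, p.1 = mkV (2*c2i a+1) (2*c2i b+1) (2*c2i c+1) (2*c2i d+1)
      (2*c2i e+1) (2*c2i f+1) (2*c2i g+1) (2*c2i h+1) := by
  decide
lemma delta_sub {v : E8Space} (hv : v ∈ E8Delta) : ∃ p ∈ pairsE8, v = toR p.1 := by
  obtain ⟨h2, hp, m, hm⟩ := hv
  have hvv : (∑ i, v i * v i) = 2 := by rw [← inner_real, h2]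
  rcases hp with hint | hhalf
  · choose n hn using hint
    have hsq : (∑ i, n i * n i : ℤ) = 2 := by
      have h : ((∑ i, n i * n i : ℤ) : ℝ) = 2 := by
        push_cast
        rw [← hvv]
        exact Finset.sum_congr rfl (fun i _ => by rw [hn i])
      exact_mod_cast h
    have hb : ∀ i, -1 ≤ n i ∧ n i ≤ 1 := by
      intro i
      have h1 : n i * n i ≤ 2 := by
        have h := Finset.single_le_sum (f := fun j => n j * n j)
          (fun j _ => mul_self_nonneg (n j)) (Finset.mem_univ i)
        rw [hsq] at h; exact h
      constructor <;> nlinarith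
    have hlt : ∀ i, ((n i + 1).toNat < 3) := by intro i; have := hb i; omega
    set a : Fin 8 → Fin 3 := fun i => ⟨(n i + 1).toNat, hlt i⟩ with ha_def
    have ha : ∀ i, ((a i : Fin 3) : ℤ) - 1 = n i := by
      intro i
      show (((n i + 1).toNat : ℕ) : ℤ) - 1 = n i
      have := hb i; omega
    rw [Fin.sum_univ_eight] at hsq
    obtain ⟨p, hpmem, hp1⟩ := int_pattern (a 0) (a 1) (a 2) (a 3) (a 4) (a 5) (a 6) (a 7)
      (by simp only [ha]; exact hsq)
    refine ⟨p, hpmem, ?_⟩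
    simp only [ha] at hp1
    have hfun : p.1 = fun i => 2 * n i := by
      rw [hp1]; exact mkV_eq (fun i => 2 * n i)
    ext i
    rw [toR_apply, hfun]
    show v i = ((2 * n i : ℤ) : ℝ) / 2
    rw [hn i]; push_cast; ring
  · choose n hn using hhalf
    have hquart : ∀ i, (1/4 : ℝ) ≤ v i * v i := by
      intro i
      rw [hn i]
      rcases le_or_gt 0 (n i) with h | h
      · have : (0:ℝ) ≤ (n i : ℝ) := by exact_mod_cast h
        nlinarith
      · have h' : n i ≤ -1 := by omega
        have : (n i : ℝ) ≤ -1 := by exact_mod_cast h'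
        nlinarith
    have hex : ∀ i, v i * v i = 1/4 := by
      intro i
      have hle : v i * v i ≤ 1/4 := by
        have hsum : v i * v i + ∑ j ∈ Finset.univ.erase i, v j * v j = 2 := by
          have h := Finset.add_sum_erase Finset.univ (fun j => v j * v j) (Finset.mem_univ i)
          rw [h]; exact hvv
        have hcard : (Finset.univ.erase i).card = 7 := by
          rw [Finset.card_erase_of_mem (Finset.mem_univ i)]; simp
        have hge : (7/4 : ℝ) ≤ ∑ j ∈ Finset.univ.erase i, v j * v j := by
          calc (7/4 : ℝ) = (Finset.univ.erase i).card * (1/4 : ℝ) := by rw [hcard]; norm_num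
            _ ≤ ∑ j ∈ Finset.univ.erase i, v j * v j :=
              Finset.card_nsmul_le_sum _ _ _ (fun j _ => hquart j) |>.trans_eq' (by
                rw [nsmul_eq_mul])
        linarith
      linarith [hquart i]
    have hzero : ∀ i, n i = 0 ∨ n i = -1 := by
      intro i
      have h := hex i
      rw [hn i] at h
      have h0 : ((n i : ℝ)) * ((n i : ℝ) + 1) = 0 := by nlinarith
      have h1 : (n i) * (n i + 1) = 0 := by exact_mod_cast h0
      rcases mul_eq_zero.1 h1 with h | h
      · left; exact h
      · right; omega
    have hsumint : 2 ∣ (n 0 + n 1 + n 2 + n 3 + n 4 + n 5 + n 6 + n 7) := by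
      have h : ((n 0 + n 1 + n 2 + n 3 + n 4 + n 5 + n 6 + n 7 : ℤ) : ℝ) = 2 * m - 4 := by
        push_cast
        have hsum : (∑ i, v i) = (((n 0 : ℝ) + n 1 + n 2 + n 3 + n 4 + n 5 + n 6 + n 7) + 4) := by
          rw [Fin.sum_univ_eight]
          rw [hn 0, hn 1, hn 2, hn 3, hn 4, hn 5, hn 6, hn 7]; ring
        rw [hsum] at hm
        linarith
      have h2 : (n 0 + n 1 + n 2 + n 3 + n 4 + n 5 + n 6 + n 7 : ℤ) = 2 * m - 4 := by
        exact_mod_cast h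
      omega
    set b : Fin 8 → Bool := fun i => n i == 0 with hb_def
    have hc : ∀ i, c2i (b i) = n i := by
      intro i
      rcases hzero i with h | h <;> simp [c2i, hb_def, h]
    obtain ⟨p, hpmem, hp1⟩ := half_pattern (b 0) (b 1) (b 2) (b 3) (b 4) (b 5) (b 6) (b 7)
      (by simp only [hc]; exact hsumint)
    refine ⟨p, hpmem, ?_⟩
    simp only [hc] at hp1
    have hfun : p.1 = fun i => 2 * n i + 1 := by
      rw [hp1]; exact mkV_eq (fun i => 2 * n i + 1)
    ext i
    rw [toR_apply, hfun]
    show v i = ((2 * n i + 1 : ℤ) : ℝ) / 2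
    rw [hn i]; push_cast; ring

lemma keyE8 {v : E8Space} (hv : v ∈ E8Delta) :
    ∃ t : ℤ, (t = -4 ∨ t = -2 ∨ t = 0 ∨ t = 2 ∨ t = 4) ∧ ⟪v, thetaE8⟫ = (t : ℝ)/2 ∧
      ∃ g ∈ stabThetaE8, g v = toR (canonD t) := by
  obtain ⟨p, hpmem, hpv⟩ := delta_sub hv
  refine ⟨p.1 6 + p.1 7, ?_, ?_, ?_⟩
  · have := pairs_level p hpmem; tauto
  · rw [hpv, inner_theta]
  · obtain ⟨g, hgH, hg⟩ := reach p.2 p.1 (allChains p hpmem)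
    exact ⟨g, hgH, by rw [hpv]; exact hg⟩

lemma canon_mem (t : ℤ) (ht : t = -4 ∨ t = -2 ∨ t = 0 ∨ t = 2 ∨ t = 4) :
    toR (canonD t) ∈ E8Delta ∧ ⟪toR (canonD t), thetaE8⟫ = (t : ℝ)/2 := by
  rcases ht with rfl | rfl | rfl | rfl | rfl <;>
    exact ⟨toR_mem (by decide), by
      rw [inner_theta]
      norm_num [show (canonD (-4) 6 : ℤ) = (-2) from rfl, show (canonD (-4) 7 : ℤ) = (-2) from rfl, show (canonD (-2) 6 : ℤ) = (-2) from rfl, show (canonD (-2) 7 : ℤ) = (0) from rfl, show (canonD (0) 6 : ℤ) = (0) from rfl, show (canonD (0) 7 : ℤ) = (0) from rfl, show (canonD (2) 6 : ℤ) = (2) from rfl, show (canonD (2) 7 : ℤ) = (0) from rfl, show (canonD (4) 6 : ℤ) = (2) from rfl, show (canonD (4) 7 : ℤ) = (2) from rfl]⟩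

/-- Two E₈ roots lie in the same orbit of the stabilizer `H` of θ if and only if
they have the same pairing with θ; consequently `H` has exactly five orbits on Δ,
namely the nonempty level sets of the pairing with θ. -/
theorem stabTheta_orbits_on_E8Delta :
    (∀ α ∈ E8Delta, ∀ β ∈ E8Delta,
      ((∃ g ∈ stabThetaE8, g α = β) ↔ ⟪α, thetaE8⟫ = ⟪β, thetaE8⟫)) ∧
    {s : Set E8Space | ∃ α ∈ E8Delta, s = {β ∈ E8Delta | ∃ g ∈ stabThetaE8, g α = β}} =
      {s : Set E8Space | ∃ i ∈ ({-2, -1, 0, 1, 2} : Set ℝ),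
        s = {x ∈ E8Delta | ⟪x, thetaE8⟫ = i}} ∧
    {s : Set E8Space |
      ∃ α ∈ E8Delta, s = {β ∈ E8Delta | ∃ g ∈ stabThetaE8, g α = β}}.ncard = 5 := by
  have part1 : ∀ α ∈ E8Delta, ∀ β ∈ E8Delta,
      ((∃ g ∈ stabThetaE8, g α = β) ↔ ⟪α, thetaE8⟫ = ⟪β, thetaE8⟫) := by
    intro α hα β hβ
    constructor
    · rintro ⟨g, hgH, rfl⟩
      have hθ : g thetaE8 = thetaE8 := MulAction.mem_stabilizer_iff.mp hgH.2
      conv_rhs => rw [← hθ]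
      rw [weyl_inner hgH.1]
    · intro hpair
      obtain ⟨t, ht5, hθα, g, hgH, hg⟩ := keyE8 hα
      obtain ⟨u, hu5, hθβ, h, hhH, hh⟩ := keyE8 hβ
      have htu : t = u := by
        rw [hθα, hθβ] at hpair
        have h' : (t : ℝ) = u := by linarith
        exact_mod_cast h'
      subst htu
      refine ⟨h⁻¹ * g, mul_mem (inv_mem hhH) hgH, ?_⟩
      calc (h⁻¹ * g) α = h⁻¹ (g α) := rfl
        _ = h⁻¹ (h β) := by rw [hg, ← hh]
        _ = (h⁻¹ * h) β := rfl
        _ = β := by rw [inv_mul_cancel]; rfl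
  have orbit_eq : ∀ α ∈ E8Delta,
      {β ∈ E8Delta | ∃ g ∈ stabThetaE8, g α = β} =
        {x ∈ E8Delta | ⟪x, thetaE8⟫ = ⟪α, thetaE8⟫} := by
    intro α hα
    ext x
    simp only [Set.mem_setOf_eq]
    constructor
    · rintro ⟨hx, hgx⟩
      exact ⟨hx, ((part1 α hα x hx).1 hgx).symm⟩
    · rintro ⟨hx, hpx⟩
      exact ⟨hx, (part1 α hα x hx).2 hpx.symm⟩
  have hti : ∀ i ∈ ({-2, -1, 0, 1, 2} : Set ℝ),
      ∃ t : ℤ, (t = -4 ∨ t = -2 ∨ t = 0 ∨ t = 2 ∨ t = 4) ∧ (t : ℝ)/2 = i := by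
    intro i hi
    simp only [Set.mem_insert_iff, Set.mem_singleton_iff] at hi
    rcases hi with rfl | rfl | rfl | rfl | rfl
    exacts [⟨-4, by norm_num⟩, ⟨-2, by norm_num⟩, ⟨0, by norm_num⟩,
      ⟨2, by norm_num⟩, ⟨4, by norm_num⟩]
  have levelmem : ∀ t : ℤ, (t = -4 ∨ t = -2 ∨ t = 0 ∨ t = 2 ∨ t = 4) →
      ((t : ℝ)/2) ∈ ({-2, -1, 0, 1, 2} : Set ℝ) := by
    intro t ht
    rcases ht with rfl | rfl | rfl | rfl | rfl <;> norm_num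
  have part2 : {s : Set E8Space | ∃ α ∈ E8Delta,
        s = {β ∈ E8Delta | ∃ g ∈ stabThetaE8, g α = β}} =
      {s : Set E8Space | ∃ i ∈ ({-2, -1, 0, 1, 2} : Set ℝ),
        s = {x ∈ E8Delta | ⟪x, thetaE8⟫ = i}} := by
    ext s
    simp only [Set.mem_setOf_eq]
    constructor
    · rintro ⟨α, hα, rfl⟩
      obtain ⟨t, ht5, hθα, -⟩ := keyE8 hα
      refine ⟨⟪α, thetaE8⟫, ?_, orbit_eq α hα⟩
      rw [hθα]
      exact levelmem t ht5
    · rintro ⟨i, hi, rfl⟩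
      obtain ⟨t, ht5, htieq⟩ := hti i hi
      obtain ⟨hmem, hpair⟩ := canon_mem t ht5
      refine ⟨toR (canonD t), hmem, ?_⟩
      rw [orbit_eq _ hmem, hpair, htieq]
  refine ⟨part1, part2, ?_⟩
  rw [part2]
  have himg : {s : Set E8Space | ∃ i ∈ ({-2, -1, 0, 1, 2} : Set ℝ),
        s = {x ∈ E8Delta | ⟪x, thetaE8⟫ = i}} =
      (fun i : ℝ => {x ∈ E8Delta | ⟪x, thetaE8⟫ = i}) '' ({-2, -1, 0, 1, 2} : Set ℝ) := by
    ext s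
    simp only [Set.mem_image, Set.mem_setOf_eq]
    constructor
    · rintro ⟨i, hi, rfl⟩; exact ⟨i, hi, rfl⟩
    · rintro ⟨i, hi, rfl⟩; exact ⟨i, hi, rfl⟩
  rw [himg]
  have hinj : Set.InjOn (fun i : ℝ => {x ∈ E8Delta | ⟪x, thetaE8⟫ = i})
      ({-2, -1, 0, 1, 2} : Set ℝ) := by
    intro i hi j hj hij
    obtain ⟨t, ht5, htieq⟩ := hti i hi
    obtain ⟨hmem, hpair⟩ := canon_mem t ht5
    have hxi : toR (canonD t) ∈ {x ∈ E8Delta | ⟪x, thetaE8⟫ = i} := ⟨hmem, by rw [hpair, htieq]⟩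
    have hxj : toR (canonD t) ∈ {x ∈ E8Delta | ⟪x, thetaE8⟫ = j} := by
      have := hij
      simp only at this
      rw [← this]
      exact hxi
    rw [← hxi.2, hxj.2]
  rw [Set.ncard_image_of_injOn hinj]
  rw [show ({-2, -1, 0, 1, 2} : Set ℝ) =
    insert (-2 : ℝ) (insert (-1) (insert 0 (insert 1 {2}))) from rfl]
  rw [Set.ncard_insert_of_notMem (by norm_num) (Set.toFinite _),
    Set.ncard_insert_of_notMem (by norm_num) (Set.toFinite _),
    Set.ncard_insert_of_notMem (by norm_num) (Set.toFinite _),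
    Set.ncard_insert_of_notMem (by norm_num) (Set.toFinite _),
    Set.ncard_singleton]
end
end

section
/- For every positive root α ∈ Δ⁺ of E₈, the cardinality of the set {β ∈ Δ⁺ : β − α ∈ Δ⁺} is at most 28, with equality if and only if α is a simple root (α ∈ Π). -/
open scoped BigOperators RealInnerProductSpace

noncomputable section

/-- The simple roots α₁,…,α₈ of E₈ (indexed by `Fin 8`, so `simpleRootE8 0 = α₁`). -/
def simpleRootE8 : Fin 8 → E8Space :=
  fun i => WithLp.toLp 2 ((![![1/2, -1/2, -1/2, -1/2, -1/2, -1/2, -1/2, 1/2],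
    ![0, 0, 0, 0, 0, -1, 1, 0],
    ![0, 0, 0, 0, -1, 1, 0, 0],
    ![0, 0, 0, -1, 1, 0, 0, 0],
    ![0, 0, -1, 1, 0, 0, 0, 0],
    ![1, 1, 0, 0, 0, 0, 0, 0],
    ![0, -1, 1, 0, 0, 0, 0, 0],
    ![-1, 1, 0, 0, 0, 0, 0, 0]] : Fin 8 → Fin 8 → ℝ) i)

/-- The positive roots of E₈: the roots that are ℕ-linear combinations of the
simple roots. -/
def E8PosRoots : Set E8Space :=
  {α ∈ E8Delta | ∃ c : Fin 8 → ℕ, α = ∑ i, (c i : ℝ) • simpleRootE8 i}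


-- ===== auxiliary development =====

set_option maxRecDepth 100000
set_option maxHeartbeats 1000000

def pdata : List (List ℤ × ℤ) := [([2, 2, 0, 0, 0, 0, 0, 0], 2), ([-2, 2, 0, 0, 0, 0, 0, 0], 2), ([2, 0, 2, 0, 0, 0, 0, 0], 4), ([-2, 0, 2, 0, 0, 0, 0, 0], 4), ([2, 0, 0, 2, 0, 0, 0, 0], 6), ([-2, 0, 0, 2, 0, 0, 0, 0], 6), ([2, 0, 0, 0, 2, 0, 0, 0], 8), ([-2, 0, 0, 0, 2, 0, 0, 0], 8), ([2, 0, 0, 0, 0, 2, 0, 0], 10), ([-2, 0, 0, 0, 0, 2, 0, 0], 10), ([2, 0, 0, 0, 0, 0, 2, 0], 12), ([-2, 0, 0, 0, 0, 0, 2, 0], 12), ([2, 0, 0, 0, 0, 0, 0, 2], 60), ([-2, 0, 0, 0, 0, 0, 0, 2], 60), ([0, 2, 2, 0, 0, 0, 0, 0], 6), ([0, -2, 2, 0, 0, 0, 0, 0], 2), ([0, 2, 0, 2, 0, 0, 0, 0], 8), ([0, -2, 0, 2, 0, 0, 0, 0], 4), ([0, 2, 0, 0, 2, 0, 0, 0],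 10), ([0, -2, 0, 0, 2, 0, 0, 0], 6), ([0, 2, 0, 0, 0, 2, 0, 0], 12), ([0, -2, 0, 0, 0, 2, 0, 0], 8), ([0, 2, 0, 0, 0, 0, 2, 0], 14), ([0, -2, 0, 0, 0, 0, 2, 0], 10), ([0, 2, 0, 0, 0, 0, 0, 2], 62), ([0, -2, 0, 0, 0, 0, 0, 2], 58), ([0, 0, 2, 2, 0, 0, 0, 0], 10), ([0, 0, -2, 2, 0, 0, 0, 0], 2), ([0, 0, 2, 0, 2, 0, 0, 0], 12), ([0, 0, -2, 0, 2, 0, 0, 0], 4), ([0, 0, 2, 0, 0, 2, 0, 0], 14), ([0, 0, -2, 0, 0, 2, 0, 0], 6), ([0, 0, 2, 0, 0, 0, 2, 0], 16), ([0, 0, -2, 0, 0, 0, 2, 0], 8), ([0, 0, 2, 0, 0, 0, 0, 2], 64), ([0, 0, -2, 0, 0, 0, 0, 2], 56), ([0, 0, 0, 2, 2, 0, 0, 0], 14), ([0, 0, 0, -2, 2, 0, 0, 0], 2), ([0, 0, 0, 2, 0, 2, 0, 0], 16), ([0, 0, 0, -2, 0, 2, 0, 0], 4), ([0, 0, 0,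 2, 0, 0, 2, 0], 18), ([0, 0, 0, -2, 0, 0, 2, 0], 6), ([0, 0, 0, 2, 0, 0, 0, 2], 66), ([0, 0, 0, -2, 0, 0, 0, 2], 54), ([0, 0, 0, 0, 2, 2, 0, 0], 18), ([0, 0, 0, 0, -2, 2, 0, 0], 2), ([0, 0, 0, 0, 2, 0, 2, 0], 20), ([0, 0, 0, 0, -2, 0, 2, 0], 4), ([0, 0, 0, 0, 2, 0, 0, 2], 68), ([0, 0, 0, 0, -2, 0, 0, 2], 52), ([0, 0, 0, 0, 0, 2, 2, 0], 22), ([0, 0, 0, 0, 0, -2, 2, 0], 2), ([0, 0, 0, 0, 0, 2, 0, 2], 70), ([0, 0, 0, 0, 0, -2, 0, 2], 50), ([0, 0, 0, 0, 0, 0, 2, 2], 72), ([0, 0, 0, 0, 0, 0, -2, 2], 48), ([1, 1, 1, 1, 1, 1, 1, 1], 51), ([1, 1, 1, 1, 1, -1, -1, 1], 29), ([1, 1, 1, 1, -1, 1, -1, 1], 31), ([1, 1, 1, 1, -1, -1, 1, 1], 33), ([1, 1, 1, -1, 1, 1, -1, 1], 33), ([1, 1, 1, -1, 1, -1, 1,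 1], 35), ([1, 1, 1, -1, -1, 1, 1, 1], 37), ([1, 1, 1, -1, -1, -1, -1, 1], 15), ([1, 1, -1, 1, 1, 1, -1, 1], 35), ([1, 1, -1, 1, 1, -1, 1, 1], 37), ([1, 1, -1, 1, -1, 1, 1, 1], 39), ([1, 1, -1, 1, -1, -1, -1, 1], 17), ([1, 1, -1, -1, 1, 1, 1, 1], 41), ([1, 1, -1, -1, 1, -1, -1, 1], 19), ([1, 1, -1, -1, -1, 1, -1, 1], 21), ([1, 1, -1, -1, -1, -1, 1, 1], 23), ([1, -1, 1, 1, 1, 1, -1, 1], 37), ([1, -1, 1, 1, 1, -1, 1, 1], 39), ([1, -1, 1, 1, -1, 1, 1, 1], 41), ([1, -1, 1, 1, -1, -1, -1, 1], 19), ([1, -1, 1, -1, 1, 1, 1, 1], 43), ([1, -1, 1, -1, 1, -1, -1, 1], 21), ([1, -1, 1, -1, -1, 1, -1, 1], 23), ([1, -1, 1, -1, -1, -1, 1, 1], 25), ([1, -1, -1, 1, 1, 1, 1, 1], 45), ([1, -1, -1, 1, 1, -1, -1, 1], 23), ([1, -1, -1, 1, -1, 1, -1, 1], 25), ([1, -1,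 -1, 1, -1, -1, 1, 1], 27), ([1, -1, -1, -1, 1, 1, -1, 1], 27), ([1, -1, -1, -1, 1, -1, 1, 1], 29), ([1, -1, -1, -1, -1, 1, 1, 1], 31), ([1, -1, -1, -1, -1, -1, -1, 1], 9), ([-1, 1, 1, 1, 1, 1, -1, 1], 39), ([-1, 1, 1, 1, 1, -1, 1, 1], 41), ([-1, 1, 1, 1, -1, 1, 1, 1], 43), ([-1, 1, 1, 1, -1, -1, -1, 1], 21), ([-1, 1, 1, -1, 1, 1, 1, 1], 45), ([-1, 1, 1, -1, 1, -1, -1, 1], 23), ([-1, 1, 1, -1, -1, 1, -1, 1], 25), ([-1, 1, 1, -1, -1, -1, 1, 1], 27), ([-1, 1, -1, 1, 1, 1, 1, 1], 47), ([-1, 1, -1, 1, 1, -1, -1, 1], 25), ([-1, 1, -1, 1, -1, 1, -1, 1], 27), ([-1, 1, -1, 1, -1, -1, 1, 1], 29), ([-1, 1, -1, -1, 1, 1, -1, 1], 29), ([-1, 1, -1, -1, 1, -1, 1, 1], 31), ([-1, 1, -1, -1, -1, 1, 1, 1], 33), ([-1, 1, -1, -1, -1, -1, -1, 1], 11), ([-1,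 -1, 1, 1, 1, 1, 1, 1], 49), ([-1, -1, 1, 1, 1, -1, -1, 1], 27), ([-1, -1, 1, 1, -1, 1, -1, 1], 29), ([-1, -1, 1, 1, -1, -1, 1, 1], 31), ([-1, -1, 1, -1, 1, 1, -1, 1], 31), ([-1, -1, 1, -1, 1, -1, 1, 1], 33), ([-1, -1, 1, -1, -1, 1, 1, 1], 35), ([-1, -1, 1, -1, -1, -1, -1, 1], 13), ([-1, -1, -1, 1, 1, 1, -1, 1], 33), ([-1, -1, -1, 1, 1, -1, 1, 1], 35), ([-1, -1, -1, 1, -1, 1, 1, 1], 37), ([-1, -1, -1, 1, -1, -1, -1, 1], 15), ([-1, -1, -1, -1, 1, 1, 1, 1], 39), ([-1, -1, -1, -1, 1, -1, -1, 1], 17), ([-1, -1, -1, -1, -1, 1, -1, 1], 19), ([-1, -1, -1, -1, -1, -1, 1, 1], 21)]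

def cdata : List (List ℤ × List ℕ) := [([2, 2, 0, 0, 0, 0, 0, 0], [0, 0, 0, 0, 0, 1, 0, 0]), ([-2, 2, 0, 0, 0, 0, 0, 0], [0, 0, 0, 0, 0, 0, 0, 1]), ([2, 0, 2, 0, 0, 0, 0, 0], [0, 0, 0, 0, 0, 1, 1, 0]), ([-2, 0, 2, 0, 0, 0, 0, 0], [0, 0, 0, 0, 0, 0, 1, 1]), ([2, 0, 0, 2, 0, 0, 0, 0], [0, 0, 0, 0, 1, 1, 1, 0]), ([-2, 0, 0, 2, 0, 0, 0, 0], [0, 0, 0, 0, 1, 0, 1, 1]), ([2, 0, 0, 0, 2, 0, 0, 0], [0, 0, 0, 1, 1, 1, 1, 0]), ([-2, 0, 0, 0, 2, 0, 0, 0], [0, 0, 0, 1, 1, 0, 1, 1]), ([2, 0, 0, 0, 0, 2, 0, 0], [0, 0, 1, 1, 1, 1, 1, 0]), ([-2, 0, 0, 0, 0, 2, 0, 0], [0, 0, 1, 1, 1, 0, 1, 1]), ([2, 0, 0, 0, 0, 0, 2, 0], [0, 1, 1, 1, 1, 1, 1, 0]), ([-2, 0, 0, 0, 0, 0, 2, 0],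 [0, 1, 1, 1, 1, 0, 1, 1]), ([2, 0, 0, 0, 0, 0, 0, 2], [2, 1, 2, 3, 4, 3, 5, 3]), ([-2, 0, 0, 0, 0, 0, 0, 2], [2, 1, 2, 3, 4, 2, 5, 4]), ([0, 2, 2, 0, 0, 0, 0, 0], [0, 0, 0, 0, 0, 1, 1, 1]), ([0, -2, 2, 0, 0, 0, 0, 0], [0, 0, 0, 0, 0, 0, 1, 0]), ([0, 2, 0, 2, 0, 0, 0, 0], [0, 0, 0, 0, 1, 1, 1, 1]), ([0, -2, 0, 2, 0, 0, 0, 0], [0, 0, 0, 0, 1, 0, 1, 0]), ([0, 2, 0, 0, 2, 0, 0, 0], [0, 0, 0, 1, 1, 1, 1, 1]), ([0, -2, 0, 0, 2, 0, 0, 0], [0, 0, 0, 1, 1, 0, 1, 0]), ([0, 2, 0, 0, 0, 2, 0, 0], [0, 0, 1, 1, 1, 1, 1, 1]), ([0, -2, 0, 0, 0, 2, 0, 0], [0, 0, 1, 1, 1, 0, 1, 0]), ([0, 2, 0, 0, 0, 0, 2, 0], [0, 1, 1, 1, 1, 1, 1, 1]), ([0, -2, 0, 0, 0, 0, 2, 0],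 [0, 1, 1, 1, 1, 0, 1, 0]), ([0, 2, 0, 0, 0, 0, 0, 2], [2, 1, 2, 3, 4, 3, 5, 4]), ([0, -2, 0, 0, 0, 0, 0, 2], [2, 1, 2, 3, 4, 2, 5, 3]), ([0, 0, 2, 2, 0, 0, 0, 0], [0, 0, 0, 0, 1, 1, 2, 1]), ([0, 0, -2, 2, 0, 0, 0, 0], [0, 0, 0, 0, 1, 0, 0, 0]), ([0, 0, 2, 0, 2, 0, 0, 0], [0, 0, 0, 1, 1, 1, 2, 1]), ([0, 0, -2, 0, 2, 0, 0, 0], [0, 0, 0, 1, 1, 0, 0, 0]), ([0, 0, 2, 0, 0, 2, 0, 0], [0, 0, 1, 1, 1, 1, 2, 1]), ([0, 0, -2, 0, 0, 2, 0, 0], [0, 0, 1, 1, 1, 0, 0, 0]), ([0, 0, 2, 0, 0, 0, 2, 0], [0, 1, 1, 1, 1, 1, 2, 1]), ([0, 0, -2, 0, 0, 0, 2, 0], [0, 1, 1, 1, 1, 0, 0, 0]), ([0, 0, 2, 0, 0, 0, 0, 2], [2, 1, 2, 3, 4, 3, 6, 4]), ([0, 0, -2, 0, 0, 0, 0, 2],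 [2, 1, 2, 3, 4, 2, 4, 3]), ([0, 0, 0, 2, 2, 0, 0, 0], [0, 0, 0, 1, 2, 1, 2, 1]), ([0, 0, 0, -2, 2, 0, 0, 0], [0, 0, 0, 1, 0, 0, 0, 0]), ([0, 0, 0, 2, 0, 2, 0, 0], [0, 0, 1, 1, 2, 1, 2, 1]), ([0, 0, 0, -2, 0, 2, 0, 0], [0, 0, 1, 1, 0, 0, 0, 0]), ([0, 0, 0, 2, 0, 0, 2, 0], [0, 1, 1, 1, 2, 1, 2, 1]), ([0, 0, 0, -2, 0, 0, 2, 0], [0, 1, 1, 1, 0, 0, 0, 0]), ([0, 0, 0, 2, 0, 0, 0, 2], [2, 1, 2, 3, 5, 3, 6, 4]), ([0, 0, 0, -2, 0, 0, 0, 2], [2, 1, 2, 3, 3, 2, 4, 3]), ([0, 0, 0, 0, 2, 2, 0, 0], [0, 0, 1, 2, 2, 1, 2, 1]), ([0, 0, 0, 0, -2, 2, 0, 0], [0, 0, 1, 0, 0, 0, 0, 0]), ([0, 0, 0, 0, 2, 0, 2, 0], [0, 1, 1, 2, 2, 1, 2, 1]), ([0, 0, 0, 0, -2, 0, 2, 0],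 [0, 1, 1, 0, 0, 0, 0, 0]), ([0, 0, 0, 0, 2, 0, 0, 2], [2, 1, 2, 4, 5, 3, 6, 4]), ([0, 0, 0, 0, -2, 0, 0, 2], [2, 1, 2, 2, 3, 2, 4, 3]), ([0, 0, 0, 0, 0, 2, 2, 0], [0, 1, 2, 2, 2, 1, 2, 1]), ([0, 0, 0, 0, 0, -2, 2, 0], [0, 1, 0, 0, 0, 0, 0, 0]), ([0, 0, 0, 0, 0, 2, 0, 2], [2, 1, 3, 4, 5, 3, 6, 4]), ([0, 0, 0, 0, 0, -2, 0, 2], [2, 1, 1, 2, 3, 2, 4, 3]), ([0, 0, 0, 0, 0, 0, 2, 2], [2, 2, 3, 4, 5, 3, 6, 4]), ([0, 0, 0, 0, 0, 0, -2, 2], [2, 0, 1, 2, 3, 2, 4, 3]), ([1, 1, 1, 1, 1, 1, 1, 1], [1, 1, 2, 3, 4, 3, 5, 3]), ([1, 1, 1, 1, 1, -1, -1, 1], [1, 0, 0, 1, 2, 2, 3, 2]), ([1, 1, 1, 1, -1, 1, -1, 1], [1, 0, 1, 1, 2, 2, 3, 2]), ([1, 1, 1, 1, -1, -1, 1, 1],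 [1, 1, 1, 1, 2, 2, 3, 2]), ([1, 1, 1, -1, 1, 1, -1, 1], [1, 0, 1, 2, 2, 2, 3, 2]), ([1, 1, 1, -1, 1, -1, 1, 1], [1, 1, 1, 2, 2, 2, 3, 2]), ([1, 1, 1, -1, -1, 1, 1, 1], [1, 1, 2, 2, 2, 2, 3, 2]), ([1, 1, 1, -1, -1, -1, -1, 1], [1, 0, 0, 0, 0, 1, 1, 1]), ([1, 1, -1, 1, 1, 1, -1, 1], [1, 0, 1, 2, 3, 2, 3, 2]), ([1, 1, -1, 1, 1, -1, 1, 1], [1, 1, 1, 2, 3, 2, 3, 2]), ([1, 1, -1, 1, -1, 1, 1, 1], [1, 1, 2, 2, 3, 2, 3, 2]), ([1, 1, -1, 1, -1, -1, -1, 1], [1, 0, 0, 0, 1, 1, 1, 1]), ([1, 1, -1, -1, 1, 1, 1, 1], [1, 1, 2, 3, 3, 2, 3, 2]), ([1, 1, -1, -1, 1, -1, -1, 1], [1, 0, 0, 1, 1, 1, 1, 1]), ([1, 1, -1, -1, -1, 1, -1, 1], [1, 0, 1, 1, 1, 1, 1, 1]), ([1, 1, -1, -1, -1, -1, 1, 1],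 [1, 1, 1, 1, 1, 1, 1, 1]), ([1, -1, 1, 1, 1, 1, -1, 1], [1, 0, 1, 2, 3, 2, 4, 2]), ([1, -1, 1, 1, 1, -1, 1, 1], [1, 1, 1, 2, 3, 2, 4, 2]), ([1, -1, 1, 1, -1, 1, 1, 1], [1, 1, 2, 2, 3, 2, 4, 2]), ([1, -1, 1, 1, -1, -1, -1, 1], [1, 0, 0, 0, 1, 1, 2, 1]), ([1, -1, 1, -1, 1, 1, 1, 1], [1, 1, 2, 3, 3, 2, 4, 2]), ([1, -1, 1, -1, 1, -1, -1, 1], [1, 0, 0, 1, 1, 1, 2, 1]), ([1, -1, 1, -1, -1, 1, -1, 1], [1, 0, 1, 1, 1, 1, 2, 1]), ([1, -1, 1, -1, -1, -1, 1, 1], [1, 1, 1, 1, 1, 1, 2, 1]), ([1, -1, -1, 1, 1, 1, 1, 1], [1, 1, 2, 3, 4, 2, 4, 2]), ([1, -1, -1, 1, 1, -1, -1, 1], [1, 0, 0, 1, 2, 1, 2, 1]), ([1, -1, -1, 1, -1, 1, -1, 1], [1, 0, 1, 1, 2, 1, 2, 1]), ([1, -1, -1, 1, -1, -1, 1, 1],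 [1, 1, 1, 1, 2, 1, 2, 1]), ([1, -1, -1, -1, 1, 1, -1, 1], [1, 0, 1, 2, 2, 1, 2, 1]), ([1, -1, -1, -1, 1, -1, 1, 1], [1, 1, 1, 2, 2, 1, 2, 1]), ([1, -1, -1, -1, -1, 1, 1, 1], [1, 1, 2, 2, 2, 1, 2, 1]), ([1, -1, -1, -1, -1, -1, -1, 1], [1, 0, 0, 0, 0, 0, 0, 0]), ([-1, 1, 1, 1, 1, 1, -1, 1], [1, 0, 1, 2, 3, 2, 4, 3]), ([-1, 1, 1, 1, 1, -1, 1, 1], [1, 1, 1, 2, 3, 2, 4, 3]), ([-1, 1, 1, 1, -1, 1, 1, 1], [1, 1, 2, 2, 3, 2, 4, 3]), ([-1, 1, 1, 1, -1, -1, -1, 1], [1, 0, 0, 0, 1, 1, 2, 2]), ([-1, 1, 1, -1, 1, 1, 1, 1], [1, 1, 2, 3, 3, 2, 4, 3]), ([-1, 1, 1, -1, 1, -1, -1, 1], [1, 0, 0, 1, 1, 1, 2, 2]), ([-1, 1, 1, -1, -1, 1, -1, 1], [1, 0, 1, 1, 1, 1, 2, 2]), ([-1, 1, 1, -1, -1,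 -1, 1, 1], [1, 1, 1, 1, 1, 1, 2, 2]), ([-1, 1, -1, 1, 1, 1, 1, 1], [1, 1, 2, 3, 4, 2, 4, 3]), ([-1, 1, -1, 1, 1, -1, -1, 1], [1, 0, 0, 1, 2, 1, 2, 2]), ([-1, 1, -1, 1, -1, 1, -1, 1], [1, 0, 1, 1, 2, 1, 2, 2]), ([-1, 1, -1, 1, -1, -1, 1, 1], [1, 1, 1, 1, 2, 1, 2, 2]), ([-1, 1, -1, -1, 1, 1, -1, 1], [1, 0, 1, 2, 2, 1, 2, 2]), ([-1, 1, -1, -1, 1, -1, 1, 1], [1, 1, 1, 2, 2, 1, 2, 2]), ([-1, 1, -1, -1, -1, 1, 1, 1], [1, 1, 2, 2, 2, 1, 2, 2]), ([-1, 1, -1, -1, -1, -1, -1, 1], [1, 0, 0, 0, 0, 0, 0, 1]), ([-1, -1, 1, 1, 1, 1, 1, 1], [1, 1, 2, 3, 4, 2, 5, 3]), ([-1, -1, 1, 1, 1, -1, -1, 1], [1, 0, 0, 1, 2, 1, 3, 2]), ([-1, -1, 1, 1, -1, 1, -1, 1], [1, 0, 1, 1, 2, 1, 3, 2]), ([-1,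 -1, 1, 1, -1, -1, 1, 1], [1, 1, 1, 1, 2, 1, 3, 2]), ([-1, -1, 1, -1, 1, 1, -1, 1], [1, 0, 1, 2, 2, 1, 3, 2]), ([-1, -1, 1, -1, 1, -1, 1, 1], [1, 1, 1, 2, 2, 1, 3, 2]), ([-1, -1, 1, -1, -1, 1, 1, 1], [1, 1, 2, 2, 2, 1, 3, 2]), ([-1, -1, 1, -1, -1, -1, -1, 1], [1, 0, 0, 0, 0, 0, 1, 1]), ([-1, -1, -1, 1, 1, 1, -1, 1], [1, 0, 1, 2, 3, 1, 3, 2]), ([-1, -1, -1, 1, 1, -1, 1, 1], [1, 1, 1, 2, 3, 1, 3, 2]), ([-1, -1, -1, 1, -1, 1, 1, 1], [1, 1, 2, 2, 3, 1, 3, 2]), ([-1, -1, -1, 1, -1, -1, -1, 1], [1, 0, 0, 0, 1, 0, 1, 1]), ([-1, -1, -1, -1, 1, 1, 1, 1], [1, 1, 2, 3, 3, 1, 3, 2]), ([-1, -1, -1, -1, 1, -1, -1, 1], [1, 0, 0, 1, 1, 0, 1, 1]), ([-1, -1, -1, -1, -1, 1, -1, 1], [1, 0, 1, 1, 1, 0,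 1, 1]), ([-1, -1, -1, -1, -1, -1, 1, 1], [1, 1, 1, 1, 1, 0, 1, 1])]

def sListE8 : List (List ℤ) := [[1, -1, -1, -1, -1, -1, -1, 1], [0, 0, 0, 0, 0, -2, 2, 0], [0, 0, 0, 0, -2, 2, 0, 0], [0, 0, 0, -2, 2, 0, 0, 0], [0, 0, -2, 2, 0, 0, 0, 0], [2, 2, 0, 0, 0, 0, 0, 0], [0, -2, 2, 0, 0, 0, 0, 0], [-2, 2, 0, 0, 0, 0, 0, 0]]

def wVE8 : List ℤ := [0, 1, 2, 3, 4, 5, 6, 30]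

def dotZ (a b : List ℤ) : ℤ := (List.zipWith (· * ·) a b).sum

def posTest (l : List ℤ) : Bool :=
  (dotZ l l == 8) && (l.sum % 4 == 0) && (decide (0 < dotZ l wVE8))

/-- Tree checker: verifies `F l` for every list `l` of length `n` with entries in
`digs` and sum of squares at most `b`. -/
def chkB (digs : List ℤ) : ℕ → ℤ → (List ℤ → Bool) → Bool
  | 0, b, F => decide (b < 0) || F []
  | n + 1, b, F => digs.all fun x => chkB digs n (b - x * x) (fun t => F (x :: t))

def rootTest (l : List ℤ) : Bool := !posTest l || pdata.any (fun p => p.1 == l)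

def fl (l : List ℤ) (i : Fin 8) : ℤ := l.getD i 0

def sf (i : Fin 8) : Fin 8 → ℤ := fl (sListE8.getD i [])

def cntE8 (p : List ℤ × ℤ) : ℕ :=
  (pdata.filter (fun q => dotZ p.1 q.1 == 4 && decide (p.2 < q.2))).length

def f28 (n : ℕ) (b : Bool) : Bool := n ≤ 28 && ((n == 28) == b)

lemma D0 : pdata.all (fun p => posTest p.1 && p.2 == dotZ p.1 wVE8 && p.1.length == 8 &&
    (p.1.all (· % 2 == 0) || p.1.all (· % 2 == 1))) = true := by decide

lemma Dnodup : (pdata.map Prod.fst).Nodup := by decide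

lemma D1even : chkB [-2, 0, 2] 8 8 rootTest = true := by decide
lemma D1odd : chkB [-1, 1] 8 8 rootTest = true := by decide

lemma D2fst : (cdata.map Prod.fst == pdata.map Prod.fst) = true := by decide

lemma D2' : ∀ q ∈ cdata, q.1 = List.ofFn (fun j => ∑ i : Fin 8, (q.2.getD i 0 : ℤ) * sf i j) := by
  decide

lemma D3 : pdata.all (fun p => f28 (cntE8 p) (sListE8.any (fun s => s == p.1))) = true := by
  decide

def toV (f : Fin 8 → ℤ) : E8Space := (WithLp.equiv 2 (Fin 8 → ℝ)).symm fun i => (f i : ℝ) / 2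

lemma toV_apply (f : Fin 8 → ℤ) (i : Fin 8) : toV f i = (f i : ℝ) / 2 := rfl

def wfE8 : Fin 8 → ℤ := fl wVE8

def dotF (f g : Fin 8 → ℤ) : ℤ := ∑ i, f i * g i

lemma finsucc3 : (Fin.succ 2 : Fin 8) = 3 := rfl
lemma finsucc4 : ((Fin.succ 2).succ : Fin 8) = 4 := rfl
lemma finsucc5 : ((Fin.succ 2).succ.succ : Fin 8) = 5 := rfl
lemma finsucc6 : ((Fin.succ 2).succ.succ.succ : Fin 8) = 6 := rfl
lemma finsucc7 : ((Fin.succ 2).succ.succ.succ.succ : Fin 8) = 7 := rfl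

lemma dot_ofFn (f g : Fin 8 → ℤ) : dotZ (List.ofFn f) (List.ofFn g) = dotF f g := by
  simp [dotZ, dotF, List.ofFn_succ, Fin.sum_univ_eight, finsucc3, finsucc4, finsucc5,
    finsucc6, finsucc7] <;> ring

lemma fl_ofFn (f : Fin 8 → ℤ) : fl (List.ofFn f) = f := by
  funext i
  rw [fl, List.getD_eq_getElem _ _ (by simp), List.getElem_ofFn]

lemma ofFn_fl (l : List ℤ) (h : l.length = 8) : List.ofFn (fl l) = l := by
  apply List.ext_getElem (by simp [h])
  intro i h1 h2
  rw [List.getElem_ofFn, fl, List.getD_eq_getElem _ _ (by simpa using h2)]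

-- Prop form of posTest
lemma posTest_iff (l : List ℤ) :
    posTest l = true ↔ dotZ l l = 8 ∧ l.sum % 4 = 0 ∧ 0 < dotZ l wVE8 := by
  simp [posTest, and_assoc]

-- facts about members of pdata
lemma pdata_facts {p : List ℤ × ℤ} (hp : p ∈ pdata) :
    dotZ p.1 p.1 = 8 ∧ p.1.sum % 4 = 0 ∧ 0 < dotZ p.1 wVE8 ∧ p.2 = dotZ p.1 wVE8 ∧
    p.1.length = 8 ∧ ((∀ x ∈ p.1, x % 2 = 0) ∨ (∀ x ∈ p.1, x % 2 = 1)) := by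
  have h := D0
  rw [List.all_eq_true] at h
  have h2 := h p hp
  simp only [Bool.and_eq_true, Bool.or_eq_true, beq_iff_eq, List.all_eq_true,
    decide_eq_true_eq, posTest] at h2
  tauto

-- soundness of the pruned tree checker
lemma chkB_sound (digs : List ℤ) (n : ℕ) :
    ∀ (b : ℤ) (F : List ℤ → Bool), chkB digs n b F = true →
    ∀ l : List ℤ, l.length = n → (∀ x ∈ l, x ∈ digs) → dotZ l l ≤ b → F l = true := by
  induction n with
  | zero =>
    intro b F h l hl _ hb
    rw [List.length_eq_zero_iff] at hl
    subst hl
    simp only [chkB, Bool.or_eq_true, decide_eq_true_eq] at h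
    rcases h with h | h
    · simp [dotZ] at hb; omega
    · exact h
  | succ n ih =>
    intro b F h l hl hd hb
    match l, hl with
    | x :: t, hl =>
      simp only [chkB, List.all_eq_true] at h
      have hx : x ∈ digs := hd x List.mem_cons_self
      have hdot : dotZ (x :: t) (x :: t) = x * x + dotZ t t := by simp [dotZ]
      exact ih (b - x * x) _ (h x hx) t (by simpa using hl)
        (fun y hy => hd y (List.mem_cons_of_mem _ hy)) (by omega)

lemma dotZ_self_nonneg (l : List ℤ) : 0 ≤ dotZ l l := by
  induction l with
  | nil => simp [dotZ]
  | cons x t ih =>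
    have : dotZ (x :: t) (x :: t) = x * x + dotZ t t := by simp [dotZ]
    nlinarith [mul_self_nonneg x]

-- completeness: every positive root vector is in pdata
lemma complete (f : Fin 8 → ℤ)
    (hpar : (∀ i, f i % 2 = 0) ∨ (∀ i, f i % 2 = 1))
    (hpt : posTest (List.ofFn f) = true) :
    ∃ p ∈ pdata, p.1 = List.ofFn f := by
  have hpt2 := hpt
  rw [posTest_iff, dot_ofFn] at hpt2
  obtain ⟨h8, -, -⟩ := hpt2
  have hbd : ∀ i, f i * f i ≤ 8 := by
    intro i
    rw [← h8]
    exact Finset.single_le_sum (f := fun j => f j * f j)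
      (fun j _ => mul_self_nonneg (f j)) (Finset.mem_univ i)
  have hbd2 : ∀ i, -2 ≤ f i ∧ f i ≤ 2 := by
    intro i
    have := hbd i
    constructor <;> nlinarith
  have key : rootTest (List.ofFn f) = true := by
    rcases hpar with hpar | hpar
    · apply chkB_sound [-2, 0, 2] 8 8 rootTest D1even _ (by simp)
      · intro x hx
        simp only [List.mem_ofFn] at hx
        obtain ⟨i, rfl⟩ := hx
        have := hbd2 i; have := hpar i
        simp only [List.mem_cons]
        omega
      · rw [dot_ofFn, h8]
    · apply chkB_sound [-1, 1] 8 8 rootTest D1odd _ (by simp)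
      · intro x hx
        simp only [List.mem_ofFn] at hx
        obtain ⟨i, rfl⟩ := hx
        have := hbd2 i; have := hpar i
        simp only [List.mem_cons]
        omega
      · rw [dot_ofFn, h8]
  rw [rootTest, Bool.or_eq_true, Bool.not_eq_true'] at key
  rcases key with key | key
  · rw [key] at hpt; exact absurd hpt (by simp)
  · simp only [List.any_eq_true, beq_iff_eq] at key
    exact key

-- ===== real side =====

lemma toV_injective : Function.Injective toV := by
  intro f g h
  funext i
  have := congrFun (congrArg (WithLp.equiv 2 (Fin 8 → ℝ)) h) i
  simp only [toV, Equiv.apply_symm_apply] at this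
  have : (f i : ℝ) = g i := by linarith
  exact_mod_cast this

lemma inner_toV (f g : Fin 8 → ℤ) : ⟪toV f, toV g⟫ = (dotF f g : ℝ) / 4 := by
  rw [PiLp.inner_apply]
  simp only [RCLike.inner_apply, conj_trivial, toV_apply, dotF]
  push_cast
  rw [Finset.sum_div]
  congr 1
  funext i
  ring

lemma sum_toV (f : Fin 8 → ℤ) : (∑ i, toV f i) = ((∑ i, f i : ℤ) : ℝ) / 2 := by
  simp only [toV_apply]
  push_cast
  rw [Finset.sum_div]

lemma toV_sub (f g : Fin 8 → ℤ) : toV (f - g) = toV f - toV g := by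
  apply (WithLp.equiv 2 (Fin 8 → ℝ)).injective
  funext i
  simp only [toV, Equiv.apply_symm_apply, WithLp.equiv_apply, WithLp.ofLp_sub, WithLp.equiv_symm_apply, WithLp.ofLp_toLp, Pi.sub_apply]
  push_cast
  ring

lemma delta_in (f : Fin 8 → ℤ) (h8 : dotF f f = 8)
    (hpar : (∀ i, f i % 2 = 0) ∨ (∀ i, f i % 2 = 1))
    (hdiv : (∑ i, f i) % 4 = 0) : toV f ∈ E8Delta := by
  refine ⟨?_, ?_, ?_⟩
  · rw [inner_toV, h8]; norm_num
  · rcases hpar with hpar | hpar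
    · left
      intro i
      obtain ⟨k, hk⟩ : ∃ k, f i = 2 * k := ⟨f i / 2, by have := hpar i; omega⟩
      exact ⟨k, by rw [toV_apply, hk]; push_cast; ring⟩
    · right
      intro i
      obtain ⟨k, hk⟩ : ∃ k, f i = 2 * k + 1 := ⟨f i / 2, by have := hpar i; omega⟩
      exact ⟨k, by rw [toV_apply, hk]; push_cast; ring⟩
  · obtain ⟨m, hm⟩ : ∃ m, (∑ i, f i) = 4 * m := ⟨(∑ i, f i) / 4, by omega⟩
    exact ⟨m, by rw [sum_toV, hm]; push_cast; ring⟩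

lemma delta_out {v : E8Space} (hv : v ∈ E8Delta) :
    ∃ f : Fin 8 → ℤ, v = toV f ∧ dotF f f = 8 ∧
      ((∀ i, f i % 2 = 0) ∨ (∀ i, f i % 2 = 1)) ∧ (∑ i, f i) % 4 = 0 := by
  obtain ⟨hn, hint, m, hm⟩ := hv
  have main : ∀ f : Fin 8 → ℤ, v = toV f →
      dotF f f = 8 ∧ (∑ i, f i) % 4 = 0 := by
    intro f hf
    constructor
    · have : ⟪v, v⟫ = (dotF f f : ℝ) / 4 := by rw [hf, inner_toV]
      rw [hn] at this
      have : (dotF f f : ℝ) = 8 := by linarith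
      exact_mod_cast this
    · have : ((∑ i, f i : ℤ) : ℝ) / 2 = 2 * m := by rw [← hm, hf, sum_toV]
      have h2 : ((∑ i, f i : ℤ) : ℝ) = ((4 * m : ℤ) : ℝ) := by push_cast at this ⊢; linarith
      have h3 : (∑ i, f i) = 4 * m := by exact_mod_cast h2
      omega
  rcases hint with hint | hint
  · choose n hnn using hint
    refine ⟨fun i => 2 * n i, ?_, ?_⟩
    · ext i
      rw [toV_apply, hnn i]
      push_cast; ring
    · have hf : v = toV (fun i => 2 * n i) := by
        ext i
        rw [toV_apply, hnn i]; push_cast; ring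
      obtain ⟨h1, h2⟩ := main _ hf
      exact ⟨h1, Or.inl fun i => by show (2 * n i) % 2 = 0; omega, h2⟩
  · choose n hnn using hint
    refine ⟨fun i => 2 * n i + 1, ?_, ?_⟩
    · ext i
      rw [toV_apply, hnn i]
      push_cast; ring
    · have hf : v = toV (fun i => 2 * n i + 1) := by
        ext i
        rw [toV_apply, hnn i]; push_cast; ring
      obtain ⟨h1, h2⟩ := main _ hf
      exact ⟨h1, Or.inr fun i => by show (2 * n i + 1) % 2 = 1; omega, h2⟩

-- ===== simple roots =====

lemma simpleRoots_eq (i : Fin 8) : simpleRootE8 i = toV (sf i) := by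
  ext j
  fin_cases i <;> fin_cases j <;>
    norm_num [simpleRootE8, toV_apply, sf, fl, sListE8]

lemma cdata_fst : cdata.map Prod.fst = pdata.map Prod.fst := beq_iff_eq.mp D2fst

-- smul bridge
lemma toV_combo (c : Fin 8 → ℕ) :
    toV (fun j => ∑ i : Fin 8, (c i : ℤ) * sf i j) = ∑ i : Fin 8, (c i : ℝ) • toV (sf i) := by
  apply (WithLp.equiv 2 (Fin 8 → ℝ)).injective
  funext j
  have happ : ∀ (x y : E8Space) (j : Fin 8), (x + y) j = x j + y j := fun _ _ _ => rfl
  rw [Fin.sum_univ_eight]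
  simp only [WithLp.equiv_apply, toV, Equiv.apply_symm_apply]
  show _ = (_ + _ + _ + _ + _ + _ + _ + _ : E8Space) j
  simp only [happ, PiLp.smul_apply, toV, WithLp.equiv_apply, smul_eq_mul]
  show ((∑ i : Fin 8, (c i : ℤ) * sf i j : ℤ) : ℝ) / 2 = _
  rw [Fin.sum_univ_eight]
  have : ∀ i : Fin 8, (WithLp.equiv 2 (Fin 8 → ℝ)).symm (fun k => (sf i k : ℝ) / 2) j
      = (sf i j : ℝ) / 2 := fun _ => rfl
  simp only [this]
  push_cast
  ring

-- ===== positive roots characterization =====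

lemma pos_in {p : List ℤ × ℤ} (hp : p ∈ pdata) : toV (fl p.1) ∈ E8PosRoots := by
  obtain ⟨h8, hs4, hw, hw2, hlen, hpar⟩ := pdata_facts hp
  have hl : List.ofFn (fl p.1) = p.1 := ofFn_fl p.1 hlen
  have hmem : ∀ i : Fin 8, fl p.1 i ∈ p.1 := by
    intro i
    rw [fl, List.getD_eq_getElem _ _ (by omega)]
    exact List.getElem_mem _
  refine ⟨delta_in _ ?_ ?_ ?_, ?_⟩
  · rw [← dot_ofFn, hl]; exact h8
  · rcases hpar with h | h
    · exact Or.inl fun i => h _ (hmem i)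
    · exact Or.inr fun i => h _ (hmem i)
  · rw [← List.sum_ofFn, hl]; exact hs4
  · have : p.1 ∈ cdata.map Prod.fst := by rw [cdata_fst]; exact List.mem_map_of_mem hp
    obtain ⟨q, hq, hq1⟩ := List.mem_map.mp this
    refine ⟨fun i => q.2.getD i 0, ?_⟩
    have h2 := D2' q hq
    rw [hq1] at h2
    rw [h2, fl_ofFn, toV_combo]
    exact Finset.sum_congr rfl fun i _ => by rw [simpleRoots_eq]

noncomputable def wRE8 : E8Space := (WithLp.equiv 2 (Fin 8 → ℝ)).symm fun j => (wfE8 j : ℝ)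

lemma inner_wR (g : Fin 8 → ℤ) : ⟪wRE8, toV g⟫ = (dotF g wfE8 : ℝ) / 2 := by
  rw [PiLp.inner_apply]
  simp only [RCLike.inner_apply, conj_trivial]
  have h1 : ∀ j : Fin 8, wRE8 j = (wfE8 j : ℝ) := fun _ => rfl
  simp only [h1, toV_apply, dotF]
  push_cast
  rw [Finset.sum_div]
  exact Finset.sum_congr rfl fun i _ => by ring

lemma spos : ∀ i : Fin 8, 0 < dotF (sf i) wfE8 := by decide

lemma pos_out {v : E8Space} (hv : v ∈ E8PosRoots) :
    ∃ p ∈ pdata, v = toV (fl p.1) := by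
  obtain ⟨hd, c, hc⟩ := hv
  obtain ⟨f, rfl, h8, hpar, hs4⟩ := delta_out hd
  -- positivity of the w-functional
  have hvW : ⟪wRE8, toV f⟫ = ∑ i : Fin 8, (c i : ℝ) * ((dotF (sf i) wfE8 : ℝ) / 2) := by
    rw [hc]
    rw [inner_sum]
    refine Finset.sum_congr rfl fun i _ => ?_
    rw [simpleRoots_eq, real_inner_smul_right, inner_wR]
  have hterm : ∀ i : Fin 8, (0:ℝ) ≤ (c i : ℝ) * ((dotF (sf i) wfE8 : ℝ) / 2) := by
    intro i
    have := spos i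
    positivity
  have hwpos : 0 < dotF f wfE8 := by
    by_contra hle
    push_neg at hle
    have hzero : ∀ i ∈ Finset.univ (α := Fin 8),
        (c i : ℝ) * ((dotF (sf i) wfE8 : ℝ) / 2) = 0 := by
      apply (Finset.sum_eq_zero_iff_of_nonneg (fun i _ => hterm i)).mp
      have h2 : ⟪wRE8, toV f⟫ = (dotF f wfE8 : ℝ) / 2 := inner_wR f
      have h3 : (dotF f wfE8 : ℝ) ≤ 0 := by exact_mod_cast hle
      have h4 : (0:ℝ) ≤ ∑ i : Fin 8, (c i : ℝ) * ((dotF (sf i) wfE8 : ℝ) / 2) :=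
        Finset.sum_nonneg fun i _ => hterm i
      rw [← hvW]; rw [h2]
      linarith
    have hc0 : ∀ i, c i = 0 := by
      intro i
      have h5 := hzero i (Finset.mem_univ i)
      have h6 : (0:ℝ) < (dotF (sf i) wfE8 : ℝ) / 2 := by
        have := spos i
        positivity
      have : (c i : ℝ) = 0 := by
        rcases mul_eq_zero.mp h5 with h | h
        · exact h
        · linarith
      exact_mod_cast this
    have hv0 : toV f = 0 := by
      rw [hc]
      apply Finset.sum_eq_zero
      intro i _
      rw [hc0 i]
      simp
    have : ⟪toV f, toV f⟫ = (2:ℝ) := hd.1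
    rw [hv0] at this
    simp at this
  -- now apply completeness
  have hpt : posTest (List.ofFn f) = true := by
    rw [posTest_iff, dot_ofFn]
    refine ⟨h8, ?_, ?_⟩
    · rw [List.sum_ofFn]; exact hs4
    · show 0 < dotZ (List.ofFn f) wVE8
      have : wVE8 = List.ofFn wfE8 := by decide
      rw [this, dot_ofFn]
      exact hwpos
  obtain ⟨p, hp, hp1⟩ := complete f hpar hpt
  exact ⟨p, hp, by rw [hp1, fl_ofFn]⟩

-- ===== function-level facts for pdata members =====

lemma pdata_factsF {p : List ℤ × ℤ} (hp : p ∈ pdata) :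
    dotF (fl p.1) (fl p.1) = 8 ∧ (∑ i, fl p.1 i) % 4 = 0 ∧
    p.2 = dotF (fl p.1) wfE8 ∧
    ((∀ i, fl p.1 i % 2 = 0) ∨ (∀ i, fl p.1 i % 2 = 1)) := by
  obtain ⟨h8, hs4, hw, hw2, hlen, hpar⟩ := pdata_facts hp
  have hl : List.ofFn (fl p.1) = p.1 := ofFn_fl p.1 hlen
  have hwl : wVE8 = List.ofFn wfE8 := by decide
  have hmem : ∀ i : Fin 8, fl p.1 i ∈ p.1 := by
    intro i
    rw [fl, List.getD_eq_getElem _ _ (by omega)]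
    exact List.getElem_mem _
  refine ⟨by rw [← dot_ofFn, hl]; exact h8, by rw [← List.sum_ofFn, hl]; exact hs4,
    by rw [hw2, ← dot_ofFn, hl, ← hwl], ?_⟩
  rcases hpar with h | h
  · exact Or.inl fun i => h _ (hmem i)
  · exact Or.inr fun i => h _ (hmem i)

lemma dotF_comm (f g : Fin 8 → ℤ) : dotF f g = dotF g f :=
  Finset.sum_congr rfl fun i _ => mul_comm _ _

lemma dotF_sub_left (f g h : Fin 8 → ℤ) : dotF (f - g) h = dotF f h - dotF g h := by
  rw [dotF, dotF, dotF, ← Finset.sum_sub_distrib]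
  exact Finset.sum_congr rfl fun i _ => by simp [sub_mul]

lemma dotF_sub_expand (f g : Fin 8 → ℤ) :
    dotF (f - g) (f - g) = dotF f f + dotF g g - 2 * dotF g f := by
  rw [dotF, dotF, dotF, dotF, ← Finset.sum_add_distrib, Finset.mul_sum,
    ← Finset.sum_sub_distrib]
  exact Finset.sum_congr rfl fun i _ => by simp [Pi.sub_apply]; ring

-- ===== the key difference lemma =====

lemma diff_iff {p q : List ℤ × ℤ} (hp : p ∈ pdata) (hq : q ∈ pdata) :
    toV (fl q.1) - toV (fl p.1) ∈ E8PosRoots ↔ (dotZ p.1 q.1 = 4 ∧ p.2 < q.2) := by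
  obtain ⟨hp8, hps, hpw, hppar⟩ := pdata_factsF hp
  obtain ⟨hq8, hqs, hqw, hqpar⟩ := pdata_factsF hq
  have hdots : dotZ p.1 q.1 = dotF (fl p.1) (fl q.1) := by
    rw [← dot_ofFn, ofFn_fl p.1 (pdata_facts hp).2.2.2.2.1, ofFn_fl q.1 (pdata_facts hq).2.2.2.2.1]
  set A := fl p.1 with hA
  set B := fl q.1 with hB
  constructor
  · rintro hmem
    obtain ⟨r, hr, hrv⟩ := pos_out hmem
    rw [← toV_sub] at hrv
    have hgr : fl r.1 = B - A := (toV_injective hrv.symm)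
    obtain ⟨hr8, hrs, hrw, hrpar⟩ := pdata_factsF hr
    rw [hgr] at hr8 hrw
    rw [dotF_sub_expand, hq8, hp8] at hr8
    have hw0 : 0 < dotF (B - A) wfE8 := by
      have h1 := (pdata_facts hr).2.2.1
      rw [← (pdata_facts hr).2.2.2.1] at h1
      rw [hrw] at h1
      exact h1
    rw [dotF_sub_left] at hw0
    constructor
    · rw [hdots]; omega
    · rw [hpw, hqw]; omega
  · rintro ⟨hdot, hlt⟩
    rw [hdots] at hdot
    have h8 : dotF (B - A) (B - A) = 8 := by
      rw [dotF_sub_expand, hq8, hp8, hdot]; ring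
    have hs4 : (∑ i, (B - A) i) % 4 = 0 := by
      have : (∑ i, (B - A) i) = (∑ i, B i) - (∑ i, A i) := by
        rw [← Finset.sum_sub_distrib]
        exact Finset.sum_congr rfl fun i _ => rfl
      omega
    have hpar : (∀ i, (B - A) i % 2 = 0) ∨ (∀ i, (B - A) i % 2 = 1) := by
      have hsub : ∀ i, (B - A) i = B i - A i := fun i => rfl
      rcases hppar with h1 | h1 <;> rcases hqpar with h2 | h2
      · exact Or.inl fun i => by have := h1 i; have := h2 i; rw [hsub]; omega
      · exact Or.inr fun i => by have := h1 i; have := h2 i; rw [hsub]; omega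
      · exact Or.inr fun i => by have := h1 i; have := h2 i; rw [hsub]; omega
      · exact Or.inl fun i => by have := h1 i; have := h2 i; rw [hsub]; omega
    have hw0 : 0 < dotF (B - A) wfE8 := by
      rw [dotF_sub_left]
      rw [hpw] at hlt
      rw [hqw] at hlt
      omega
    have hpt : posTest (List.ofFn (B - A)) = true := by
      rw [posTest_iff, dot_ofFn]
      refine ⟨h8, by rw [List.sum_ofFn]; exact hs4, ?_⟩
      have hwl : wVE8 = List.ofFn wfE8 := by decide
      rw [hwl, dot_ofFn]
      exact hw0
    obtain ⟨r, hr, hr1⟩ := complete (B - A) hpar hpt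
    have : toV (fl r.1) ∈ E8PosRoots := pos_in hr
    rw [hr1, fl_ofFn, toV_sub] at this
    exact this

-- ===== counting bridge =====

lemma pdata_nodup : pdata.Nodup := Dnodup.of_map Prod.fst

lemma cnt_facts {p : List ℤ × ℤ} (hp : p ∈ pdata) :
    cntE8 p ≤ 28 ∧ (cntE8 p = 28 ↔ p.1 ∈ sListE8) := by
  have h := D3
  rw [List.all_eq_true] at h
  have h2 := h p hp
  rw [f28, Bool.and_eq_true] at h2
  obtain ⟨h3, h4⟩ := h2
  refine ⟨by simpa using h3, ?_⟩
  have h4' : (cntE8 p == 28) = sListE8.any (fun s => s == p.1) := beq_iff_eq.mp h4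
  have h5 : (cntE8 p = 28) ↔ (sListE8.any (fun s => s == p.1) = true) := by
    rw [← h4']
    exact beq_iff_eq.symm
  rw [h5]
  simp only [List.any_eq_true, beq_iff_eq]
  constructor
  · rintro ⟨s, hs, rfl⟩; exact hs
  · intro hh; exact ⟨p.1, hh, rfl⟩

lemma sListE8_len : ∀ i : Fin 8, (sListE8.getD i []).length = 8 := by decide

lemma sListE8_length : sListE8.length = 8 := by decide

lemma mem_sListE8_iff (l : List ℤ) : l ∈ sListE8 ↔ ∃ i : Fin 8, sListE8.getD (i : ℕ) [] = l := by
  constructor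
  · intro hl
    obtain ⟨n, hn, he⟩ := List.mem_iff_getElem.mp hl
    rw [sListE8_length] at hn
    exact ⟨⟨n, hn⟩, by rw [List.getD_eq_getElem _ _ (by rw [sListE8_length]; exact hn)]; exact he⟩
  · rintro ⟨i, rfl⟩
    rw [List.getD_eq_getElem _ _ (by rw [sListE8_length]; exact i.isLt)]
    exact List.getElem_mem _


/-- For each positive root α of E₈, the number of positive roots β with β − α again
a positive root is at most 28, with equality exactly when α is a simple root. -/
theorem E8_posRoot_difference_count (α : E8Space) (hα : α ∈ E8PosRoots) :
    {β ∈ E8PosRoots | β - α ∈ E8PosRoots}.ncard ≤ 28 ∧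
    ({β ∈ E8PosRoots | β - α ∈ E8PosRoots}.ncard = 28 ↔ α ∈ Set.range simpleRootE8) := by
  obtain ⟨p, hp, hav⟩ := pos_out hα
  classical
  -- the target set as a Finset image
  set Fq : Finset (List ℤ × ℤ) :=
    pdata.toFinset.filter (fun q => dotZ p.1 q.1 = 4 ∧ p.2 < q.2) with hFq
  have hset : {β ∈ E8PosRoots | β - α ∈ E8PosRoots} =
      ↑(Fq.image (fun q => toV (fl q.1))) := by
    ext β
    simp only [Set.mem_setOf_eq, Finset.coe_image, Set.mem_image, Finset.mem_coe,
      hFq, Finset.mem_filter, List.mem_toFinset]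
    constructor
    · rintro ⟨hβ, hβα⟩
      obtain ⟨q, hq, rfl⟩ := pos_out hβ
      rw [hav] at hβα
      exact ⟨q, ⟨hq, (diff_iff hp hq).mp hβα⟩, rfl⟩
    · rintro ⟨q, ⟨hq, hcond⟩, rfl⟩
      refine ⟨pos_in hq, ?_⟩
      rw [hav]
      exact (diff_iff hp hq).mpr hcond
  have hinj : Set.InjOn (fun q : List ℤ × ℤ => toV (fl q.1)) (Fq : Set (List ℤ × ℤ)) := by
    intro q hq q' hq' he
    have hq2 : q ∈ pdata := by
      rw [hFq] at hq; simp only [Finset.coe_filter, Set.mem_setOf_eq, List.mem_toFinset] at hq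
      exact hq.1
    have hq2' : q' ∈ pdata := by
      rw [hFq] at hq'; simp only [Finset.coe_filter, Set.mem_setOf_eq, List.mem_toFinset] at hq'
      exact hq'.1
    have h1 : fl q.1 = fl q'.1 := toV_injective he
    have h2 : q.1 = q'.1 := by
      rw [← ofFn_fl q.1 (pdata_facts hq2).2.2.2.2.1, ← ofFn_fl q'.1 (pdata_facts hq2').2.2.2.2.1,
        h1]
    have h3 : q.2 = q'.2 := by
      rw [(pdata_facts hq2).2.2.2.1, (pdata_facts hq2').2.2.2.1, h2]
    exact Prod.ext h2 h3
  have hcard : {β ∈ E8PosRoots | β - α ∈ E8PosRoots}.ncard = Fq.card := by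
    rw [hset, Set.ncard_coe_finset, Finset.card_image_of_injOn hinj]
  -- identify Fq.card with cntE8 p
  have hcnt : Fq.card = cntE8 p := by
    rw [hFq, cntE8]
    rw [Finset.filter_congr_decidable]
    have : (pdata.toFinset.filter (fun q => dotZ p.1 q.1 = 4 ∧ p.2 < q.2)) =
        (pdata.filter (fun q => dotZ p.1 q.1 == 4 && decide (p.2 < q.2))).toFinset := by
      rw [List.toFinset_filter]
      apply Finset.filter_congr
      intro q _
      simp
    rw [this, List.toFinset_card_of_nodup (pdata_nodup.filter _)]
  obtain ⟨hle, hiff⟩ := cnt_facts hp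
  rw [hcard, hcnt]
  refine ⟨hle, hiff.trans ?_⟩
  -- p.1 ∈ sListE8 ↔ α ∈ range simpleRootE8
  rw [mem_sListE8_iff]
  constructor
  · rintro ⟨i, hi⟩
    refine ⟨i, ?_⟩
    rw [simpleRoots_eq, hav, sf, hi]
  · rintro ⟨i, hi⟩
    refine ⟨i, ?_⟩
    rw [simpleRoots_eq, hav] at hi
    have h1 : sf i = fl p.1 := toV_injective hi
    rw [← ofFn_fl p.1 (pdata_facts hp).2.2.2.2.1, ← h1, sf, ofFn_fl _ (sListE8_len i)]
end
end
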